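/- arXiv:2104.14101 — 4 statements merged into one kernel-verified Lean document; each statement's English description precedes it below -/
import Mathlib

section
/- Let ρ ∈ (0,1) and let S ∈ ℝ^{m×n} be any matrix such that ‖C_S − I_d‖₂ ≤ √ρ. Then for every x ∈ ℝ^d, the exact and approximate Newton decrements satisfy |δ_x − δ̃_x| ≤ √ρ · δ̃_x. -/
open Matrix MeasureTheory ProbabilityTheory Real Polynomial
open scoped Classical

noncomputable section

/-- Spectral (operator) norm of a real matrix, via its action on Euclidean space. -/
def matSpectralNorm {k l : ℕ} (M : Matrix (Fin k) (Fin l) ℝ) : ℝ :=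
  ‖LinearMap.toContinuousLinearMap (Matrix.toEuclideanLin M)‖

/-- Positive semidefinite square root of a matrix (junk value `0` if `M` is not
positive semidefinite). -/
def msqrt {d : ℕ} (M : Matrix (Fin d) (Fin d) ℝ) : Matrix (Fin d) (Fin d) ℝ :=
  if h : M.PosSemidef then
    h.1.eigenvectorUnitary.1 * diagonal (Real.sqrt ∘ h.1.eigenvalues) *
      (star h.1.eigenvectorUnitary : Matrix (Fin d) (Fin d) ℝ) else 0

/-- The Hessian `H = Aᵀ A + ν² Λ`. -/
def Hmat {n d : ℕ} (A : Matrix (Fin n) (Fin d) ℝ) (ν : ℝ)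
    (Λ : Matrix (Fin d) (Fin d) ℝ) : Matrix (Fin d) (Fin d) ℝ :=
  Aᵀ * A + ν ^ 2 • Λ

/-- The sketched Hessian `H_S = Aᵀ Sᵀ S A + ν² Λ`. -/
def HSmat {n d m : ℕ} (A : Matrix (Fin n) (Fin d) ℝ) (ν : ℝ)
    (Λ : Matrix (Fin d) (Fin d) ℝ) (S : Matrix (Fin m) (Fin n) ℝ) :
    Matrix (Fin d) (Fin d) ℝ :=
  Aᵀ * Sᵀ * S * A + ν ^ 2 • Λ

/-- `C_S = H^{-1/2} H_S H^{-1/2}`. -/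
def CSmat {n d m : ℕ} (A : Matrix (Fin n) (Fin d) ℝ) (ν : ℝ)
    (Λ : Matrix (Fin d) (Fin d) ℝ) (S : Matrix (Fin m) (Fin n) ℝ) :
    Matrix (Fin d) (Fin d) ℝ :=
  (msqrt (Hmat A ν Λ))⁻¹ * HSmat A ν Λ S * (msqrt (Hmat A ν Λ))⁻¹

/-- The minimizer `x* = H⁻¹ b`. -/
def xstar {n d : ℕ} (A : Matrix (Fin n) (Fin d) ℝ) (ν : ℝ)
    (Λ : Matrix (Fin d) (Fin d) ℝ) (b : Fin d → ℝ) : Fin d → ℝ :=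
  (Hmat A ν Λ)⁻¹.mulVec b

/-- The gradient `∇f(x) = H x - b`. -/
def gradf {n d : ℕ} (A : Matrix (Fin n) (Fin d) ℝ) (ν : ℝ)
    (Λ : Matrix (Fin d) (Fin d) ℝ) (b : Fin d → ℝ) (x : Fin d → ℝ) : Fin d → ℝ :=
  (Hmat A ν Λ).mulVec x - b

/-- The exact error `δ_x = (1/2)(x - x*)ᵀ H (x - x*)`. -/
def deltaEx {n d : ℕ} (A : Matrix (Fin n) (Fin d) ℝ) (ν : ℝ)
    (Λ : Matrix (Fin d) (Fin d) ℝ) (b : Fin d → ℝ) (x : Fin d → ℝ) : ℝ :=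
  (1 / 2) * ((x - xstar A ν Λ b) ⬝ᵥ (Hmat A ν Λ).mulVec (x - xstar A ν Λ b))

/-- The approximate Newton decrement `δ̃_x = (1/2) ∇f(x)ᵀ H_S⁻¹ ∇f(x)`. -/
def deltaApx {n d m : ℕ} (A : Matrix (Fin n) (Fin d) ℝ) (ν : ℝ)
    (Λ : Matrix (Fin d) (Fin d) ℝ) (b : Fin d → ℝ)
    (S : Matrix (Fin m) (Fin n) ℝ) (x : Fin d → ℝ) : ℝ :=
  (1 / 2) * (gradf A ν Λ b x ⬝ᵥ (HSmat A ν Λ S)⁻¹.mulVec (gradf A ν Λ b x))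

namespace Stmt0Aux

variable {d : ℕ}

lemma herm_transpose {M : Matrix (Fin d) (Fin d) ℝ} (hM : M.IsHermitian) : Mᵀ = M := by
  rw [← Matrix.conjTranspose_eq_transpose_of_trivial]; exact hM

lemma conj_form (M N : Matrix (Fin d) (Fin d) ℝ) (a b : Fin d → ℝ) :
    (M *ᵥ a) ⬝ᵥ (N *ᵥ b) = a ⬝ᵥ ((Mᵀ * N) *ᵥ b) := by
  rw [← Matrix.mulVec_mulVec, Matrix.dotProduct_mulVec a Mᵀ, Matrix.vecMul_transpose]

lemma posDef_smul {c : ℝ} (hc : 0 < c) {M : Matrix (Fin d) (Fin d) ℝ} (hM : M.PosDef) :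
    (c • M).PosDef := by
  exact hM.smul hc

lemma posDef_conj {M B : Matrix (Fin d) (Fin d) ℝ} (hM : M.PosDef) (hB : IsUnit B) :
    (Bᵀ * M * B).PosDef := by
  simpa [Matrix.conjTranspose_eq_transpose_of_trivial] using
    hM.conjTranspose_mul_mul_same (Matrix.mulVec_injective_of_isUnit hB)

lemma quad_bound {k : ℕ} (M : Matrix (Fin k) (Fin k) ℝ) (v : Fin k → ℝ) :
    |v ⬝ᵥ (M *ᵥ v)| ≤ matSpectralNorm M * (v ⬝ᵥ v) := by
  set T := LinearMap.toContinuousLinearMap (Matrix.toEuclideanLin M) with hT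
  set v' : EuclideanSpace ℝ (Fin k) := (WithLp.equiv 2 _).symm v with hv'
  have h1 : v ⬝ᵥ (M *ᵥ v) = inner ℝ v' (T v') := by
    simp [hT, hv', Matrix.toEuclideanLin_apply, PiLp.inner_apply, RCLike.inner_apply,
      dotProduct, mul_comm]
  have h2 : v ⬝ᵥ v = ‖v'‖ ^ 2 := by
    rw [EuclideanSpace.norm_eq, Real.sq_sqrt (Finset.sum_nonneg fun i _ => sq_nonneg _)]
    simp [hv', dotProduct, sq]
  have h3 := abs_real_inner_le_norm v' (T v')
  have h4 := T.le_opNorm v'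
  have h5 : (0:ℝ) ≤ ‖v'‖ := norm_nonneg _
  rw [h1, h2]
  calc |inner ℝ v' (T v')| ≤ ‖v'‖ * ‖T v'‖ := h3
    _ ≤ ‖v'‖ * (‖T‖ * ‖v'‖) := mul_le_mul_of_nonneg_left h4 h5
    _ = matSpectralNorm M * ‖v'‖ ^ 2 := by rw [matSpectralNorm, ← hT]; ring

lemma idem_unit {M : Matrix (Fin d) (Fin d) ℝ} (h : M * M = M) (hU : IsUnit M) : M = 1 := by
  have hdet : IsUnit M.det := (Matrix.isUnit_iff_isUnit_det M).mp hU
  have hMinv : M * M⁻¹ = 1 := Matrix.mul_nonsing_inv _ hdet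
  calc M = M * (M * M⁻¹) := by rw [hMinv, Matrix.mul_one]
    _ = (M * M) * M⁻¹ := by rw [Matrix.mul_assoc]
    _ = M * M⁻¹ := by rw [h]
    _ = 1 := hMinv

lemma msqrt_mul_self {M : Matrix (Fin d) (Fin d) ℝ} (h : M.PosSemidef) :
    msqrt M * msqrt M = M := by
  rw [msqrt, dif_pos h]
  set U := h.1.eigenvectorUnitary with hUdef
  have hU : (star U : Matrix (Fin d) (Fin d) ℝ) * U.1 = 1 := by
    have := congrArg Subtype.val (Unitary.star_mul_self U)
    simpa using this
  have hD : diagonal (Real.sqrt ∘ h.1.eigenvalues) * diagonal (Real.sqrt ∘ h.1.eigenvalues)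
      = diagonal h.1.eigenvalues := by
    rw [Matrix.diagonal_mul_diagonal]
    congr 1
    funext i
    exact Real.mul_self_sqrt (h.eigenvalues_nonneg i)
  calc U.1 * diagonal (Real.sqrt ∘ h.1.eigenvalues) * (star U : Matrix (Fin d) (Fin d) ℝ) *
        (U.1 * diagonal (Real.sqrt ∘ h.1.eigenvalues) * (star U : Matrix (Fin d) (Fin d) ℝ))
        = U.1 * (diagonal (Real.sqrt ∘ h.1.eigenvalues) *
          ((star U : Matrix (Fin d) (Fin d) ℝ) * U.1) * diagonal (Real.sqrt ∘ h.1.eigenvalues))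
          * (star U : Matrix (Fin d) (Fin d) ℝ) := by
        simp only [Matrix.mul_assoc]
    _ = U.1 * diagonal h.1.eigenvalues * (star U : Matrix (Fin d) (Fin d) ℝ) := by
        rw [hU, Matrix.mul_one, hD]
    _ = M := by
        conv_rhs => rw [h.1.spectral_theorem]
        simp [Unitary.conjStarAlgAut_apply]
        rfl

lemma msqrt_transpose {M : Matrix (Fin d) (Fin d) ℝ} (h : M.PosSemidef) :
    (msqrt M)ᵀ = msqrt M := by
  rw [msqrt, dif_pos h]
  simp [Matrix.transpose_mul, Matrix.star_eq_conjTranspose,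
    Matrix.conjTranspose_eq_transpose_of_trivial, Matrix.mul_assoc]

end Stmt0Aux

/-- If `‖C_S - I‖₂ ≤ √ρ` with `ρ ∈ (0,1)`, then for every `x`,
`|δ_x - δ̃_x| ≤ √ρ · δ̃_x`. -/
theorem stmt0 {n d m : ℕ} (hd : 1 ≤ d) (hdn : d ≤ n)
    (A : Matrix (Fin n) (Fin d) ℝ) (b : Fin d → ℝ)
    (Λ : Matrix (Fin d) (Fin d) ℝ) (hΛdiag : Λ.IsDiag)
    (hΛ : (Λ - 1).PosSemidef) (ν : ℝ) (hν : 0 < ν)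
    (ρ : ℝ) (hρ : ρ ∈ Set.Ioo (0 : ℝ) 1)
    (S : Matrix (Fin m) (Fin n) ℝ)
    (hS : matSpectralNorm (CSmat A ν Λ S - 1) ≤ Real.sqrt ρ)
    (x : Fin d → ℝ) :
    |deltaEx A ν Λ b x - deltaApx A ν Λ b S x| ≤ Real.sqrt ρ * deltaApx A ν Λ b S x := by
  have hΛpd : Λ.PosDef := by
    have h1 : (1 : Matrix (Fin d) (Fin d) ℝ).PosDef := Matrix.PosDef.one
    have := h1.add_posSemidef hΛ
    simpa using this
  have hνsq : (0:ℝ) < ν ^ 2 := by positivity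
  have hsmul : ((ν ^ 2 : ℝ) • Λ).PosDef := Stmt0Aux.posDef_smul hνsq hΛpd
  have hHpd : (Hmat A ν Λ).PosDef := by
    rw [Hmat]
    have h1 : (Aᵀ * A).PosSemidef := by
      have := Matrix.posSemidef_conjTranspose_mul_self A
      simpa [Matrix.conjTranspose_eq_transpose_of_trivial] using this
    exact Matrix.PosDef.posSemidef_add h1 hsmul
  have hHSpd : (HSmat A ν Λ S).PosDef := by
    rw [HSmat]
    have h1 : (Aᵀ * Sᵀ * S * A).PosSemidef := by
      have := Matrix.posSemidef_conjTranspose_mul_self (S * A)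
      simpa [Matrix.conjTranspose_eq_transpose_of_trivial, Matrix.transpose_mul,
        Matrix.mul_assoc] using this
    exact Matrix.PosDef.posSemidef_add h1 hsmul
  set H := Hmat A ν Λ with hHdef
  set HS := HSmat A ν Λ S with hHSdef
  have hHpsd : H.PosSemidef := hHpd.posSemidef
  set R := msqrt H with hRdef
  have hRR : R * R = H := Stmt0Aux.msqrt_mul_self hHpsd
  have hRsym : Rᵀ = R := Stmt0Aux.msqrt_transpose hHpsd
  have hHdetU : IsUnit H.det := hHpd.det_pos.ne'.isUnit
  have hRdetU : IsUnit R.det := by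
    have hdet : R.det * R.det = H.det := by rw [← Matrix.det_mul, hRR]
    have hne : R.det ≠ 0 := by
      intro h
      rw [h, mul_zero] at hdet
      exact hHpd.det_pos.ne' hdet.symm
    exact hne.isUnit
  have hRunit : IsUnit R := (Matrix.isUnit_iff_isUnit_det R).mpr hRdetU
  have hRR1 : R * R⁻¹ = 1 := Matrix.mul_nonsing_inv R hRdetU
  have hR1R : R⁻¹ * R = 1 := Matrix.nonsing_inv_mul R hRdetU
  have hRinvsym : (R⁻¹)ᵀ = R⁻¹ := by rw [Matrix.transpose_nonsing_inv, hRsym]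
  set C := R⁻¹ * HS * R⁻¹ with hCdef
  have hC : CSmat A ν Λ S = C := rfl
  have hCpd : C.PosDef := by
    have := Stmt0Aux.posDef_conj hHSpd (Matrix.isUnit_nonsing_inv_iff.mpr hRunit)
    rwa [hRinvsym] at this
  have hCdetU : IsUnit C.det := hCpd.det_pos.ne'.isUnit
  have hCinv : C⁻¹ = R * HS⁻¹ * R := by
    rw [hCdef, Matrix.mul_inv_rev, Matrix.mul_inv_rev,
      Matrix.nonsing_inv_nonsing_inv R hRdetU, Matrix.mul_assoc]
  have hCinvpd : C⁻¹.PosDef := hCpd.inv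
  have hCinvpsd : (C⁻¹).PosSemidef := hCinvpd.posSemidef
  set W := msqrt C⁻¹ with hWdef
  have hWW : W * W = C⁻¹ := Stmt0Aux.msqrt_mul_self hCinvpsd
  have hWsym : Wᵀ = W := Stmt0Aux.msqrt_transpose hCinvpsd
  have hWdetU : IsUnit W.det := by
    have hdet : W.det * W.det = (C⁻¹).det := by rw [← Matrix.det_mul, hWW]
    have hne : W.det ≠ 0 := by
      intro h
      rw [h, mul_zero] at hdet
      exact hCinvpd.det_pos.ne' hdet.symm
    exact hne.isUnit
  have hWunit : IsUnit W := (Matrix.isUnit_iff_isUnit_det W).mpr hWdetU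
  have hP : W * C * W = 1 := by
    have hCC : C * (W * W) * C = C := by
      rw [hWW, Matrix.mul_nonsing_inv C hCdetU, Matrix.one_mul]
    have hidem : (W * C * W) * (W * C * W) = W * C * W := by
      calc (W * C * W) * (W * C * W) = W * (C * (W * W) * C) * W := by
            simp only [Matrix.mul_assoc]
        _ = W * C * W := by rw [hCC, Matrix.mul_assoc]
    exact Stmt0Aux.idem_unit hidem ((hWunit.mul hCpd.isUnit).mul hWunit)
  -- vectors
  set g := gradf A ν Λ b x with hgdef
  set e := x - xstar A ν Λ b with hedef
  have hg : g = H *ᵥ e := by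
    have hHxs : H *ᵥ (xstar A ν Λ b) = b := by
      rw [xstar, Matrix.mulVec_mulVec, Matrix.mul_nonsing_inv H hHdetU, Matrix.one_mulVec]
    rw [hgdef, gradf, hedef, Matrix.mulVec_sub, hHxs]
  set u := R *ᵥ e with hudef
  have hu : R⁻¹ *ᵥ g = u := by
    rw [hg, Matrix.mulVec_mulVec, ← hRR, ← Matrix.mul_assoc, hR1R, Matrix.one_mul, hudef]
  have hEx : deltaEx A ν Λ b x = (1/2) * (u ⬝ᵥ u) := by
    rw [deltaEx]
    congr 1
    have h := Stmt0Aux.conj_form R R e e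
    rw [hRsym, hRR] at h
    exact h.symm
  set v := W *ᵥ u with hvdef
  have hApx : deltaApx A ν Λ b S x = (1/2) * (v ⬝ᵥ v) := by
    rw [deltaApx]
    congr 1
    have h1 : v ⬝ᵥ v = u ⬝ᵥ (C⁻¹ *ᵥ u) := by
      have h := Stmt0Aux.conj_form W W u u
      rwa [hWsym, hWW] at h
    have h2 : u ⬝ᵥ (C⁻¹ *ᵥ u) = g ⬝ᵥ (HS⁻¹ *ᵥ g) := by
      rw [← hu, Matrix.mulVec_mulVec]
      have h := Stmt0Aux.conj_form R⁻¹ (C⁻¹ * R⁻¹) g g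
      rw [hRinvsym] at h
      rw [h]
      have h3 : R⁻¹ * (C⁻¹ * R⁻¹) = HS⁻¹ := by
        rw [hCinv]
        simp only [Matrix.mul_assoc]
        rw [hRR1, Matrix.mul_one, ← Matrix.mul_assoc, hR1R, Matrix.one_mul]
      rw [h3]
    rw [h1, h2]
  have hkey : u ⬝ᵥ u = v ⬝ᵥ (C *ᵥ v) := by
    have h := Stmt0Aux.conj_form W (C * W) u u
    rw [hWsym, ← Matrix.mul_assoc, hP, Matrix.one_mulVec] at h
    rw [← h, hvdef, ← Matrix.mulVec_mulVec]
  have hvv : (0:ℝ) ≤ v ⬝ᵥ v := by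
    rw [dotProduct]
    exact Finset.sum_nonneg fun i _ => mul_self_nonneg _
  have hS' : matSpectralNorm (C - 1) ≤ Real.sqrt ρ := by rwa [hC] at hS
  have hb2 := Stmt0Aux.quad_bound (C - 1) v
  have hchain : |v ⬝ᵥ ((C - 1) *ᵥ v)| ≤ Real.sqrt ρ * (v ⬝ᵥ v) :=
    hb2.trans (mul_le_mul_of_nonneg_right hS' hvv)
  have hdiff : deltaEx A ν Λ b x - deltaApx A ν Λ b S x
      = (1/2) * (v ⬝ᵥ ((C - 1) *ᵥ v)) := by
    rw [hEx, hApx, hkey, Matrix.sub_mulVec, dotProduct_sub, Matrix.one_mulVec]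
    ring
  rw [hdiff, hApx, abs_mul]
  rw [abs_of_pos (by norm_num : (0:ℝ) < 1/2)]
  calc (1/2) * |v ⬝ᵥ ((C - 1) *ᵥ v)| ≤ (1/2) * (Real.sqrt ρ * (v ⬝ᵥ v)) := by
        linarith [hchain]
    _ = Real.sqrt ρ * ((1/2) * (v ⬝ᵥ v)) := by ring
end
end

section
/- Let X ∈ ℝ^{d×d} be a symmetric positive definite matrix with λ·I_d ⪯ X ⪯ Λ·I_d for some 0 < λ < Λ, and set μ = 4/(√λ + √Λ)² and β = ((√Λ − √λ)/(√Λ + √λ))². Let (z_t)_{t≥0} be any sequence in ℝ^d satisfying z_{t+1} = (1+β)z_t − μ X z_t − β z_{t−1} for all t ≥ 1, with ‖z_1‖₂² + ‖z_0‖₂² > 0. Then for every t ≥ 1, (‖z_{t+1}‖₂² + ‖z_t‖₂²)/(‖z_1‖₂² + ‖z_0‖₂²) ≤ α(t) · β^{ω(t)}, where ν(t) = log(t)/log(2) + 1, ω(t) = t − 2ν(t), and α(t) = 3^{ν(t)(ν(t)+1)} · (1 + 4β + β²)^{2ν(t)}. -/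
open Matrix Real
open scoped Classical

noncomputable section

def chebS (c : ℝ) : ℕ → ℝ
  | 0 => 0
  | 1 => 1
  | (n+2) => 2*c*chebS c (n+1) - chebS c n

lemma chebS_invariant (c : ℝ) (n : ℕ) :
    (chebS c (n+1))^2 - 2*c*(chebS c (n+1))*(chebS c n) + (chebS c n)^2 = 1 := by
  induction n with
  | zero => simp [chebS]
  | succ n ih =>
    show (chebS c (n+2))^2 - 2*c*(chebS c (n+2))*(chebS c (n+1)) + (chebS c (n+1))^2 = 1
    rw [show chebS c (n+2) = 2*c*chebS c (n+1) - chebS c n from rfl]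
    linear_combination ih

lemma chebS_abs_le (c : ℝ) (hc : |c| ≤ 1) (n : ℕ) : |chebS c n| ≤ n := by
  have hc2 : c^2 ≤ 1 := by
    have := abs_le.mp hc; nlinarith [this.1, this.2]
  induction n with
  | zero => simp [chebS]
  | succ n ih =>
    have hinv := chebS_invariant c n
    have h1 : (chebS c (n+1) - c * chebS c n)^2 ≤ 1 := by
      nlinarith [sq_nonneg (chebS c n), mul_nonneg (sub_nonneg.2 hc2) (sq_nonneg (chebS c n))]
    have h2 : |chebS c (n+1) - c * chebS c n| ≤ 1 := by
      refine abs_le.mpr ⟨?_, ?_⟩ <;> nlinarith [sq_nonneg (chebS c (n+1) - c * chebS c n + 1), sq_nonneg (chebS c (n+1) - c * chebS c n - 1)]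
    calc |chebS c (n+1)| = |(chebS c (n+1) - c * chebS c n) + c * chebS c n| := by ring_nf
      _ ≤ |chebS c (n+1) - c * chebS c n| + |c * chebS c n| := abs_add_le _ _
      _ ≤ 1 + |c| * |chebS c n| := by rw [abs_mul]; gcongr
      _ ≤ 1 + 1 * n := by gcongr
      _ = (n+1 : ℕ) := by push_cast; ring



lemma scalar_form (a b : ℝ) (hb : 0 < b) (y : ℕ → ℝ)
    (hy : ∀ t : ℕ, 1 ≤ t → y (t+1) = a * y t - b * y (t-1)) :
    ∀ n : ℕ, y (n+1) = (Real.sqrt b)^n *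
      (y 1 * chebS (a/(2*Real.sqrt b)) (n+1) - Real.sqrt b * y 0 * chebS (a/(2*Real.sqrt b)) n) := by
  set S := Real.sqrt b with hS
  have hsb : 0 < S := Real.sqrt_pos.2 hb
  have hsb2 : S ^ 2 = b := Real.sq_sqrt hb.le
  set c := a/(2*S) with hc
  have hac : a = 2 * c * S := by rw [hc]; field_simp [hsb.ne']
  have key : ∀ n : ℕ, y (n+1) = S^n * (y 1 * chebS c (n+1) - S * y 0 * chebS c n)
      ∧ y (n+2) = S^(n+1) * (y 1 * chebS c (n+2) - S * y 0 * chebS c (n+1)) := by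
    intro n
    induction n with
    | zero =>
      constructor
      · simp [chebS]
      · have h2 := hy 1 le_rfl
        simp only [show (1:ℕ)-1 = 0 from rfl] at h2
        rw [h2, show chebS c 2 = 2*c*chebS c 1 - chebS c 0 from rfl, hac, ← hsb2]
        simp [chebS]; ring
    | succ n ih =>
      refine ⟨ih.2, ?_⟩
      have hrec := hy (n+2) (by omega)
      simp only [show n+2-1 = n+1 from rfl] at hrec
      rw [hrec, ih.1, ih.2, show chebS c (n+3) = 2*c*chebS c (n+2) - chebS c (n+1) from rfl,
        show chebS c (n+2) = 2*c*chebS c (n+1) - chebS c n from rfl, hac, ← hsb2]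
      ring
  exact fun n => (key n).1

lemma scalar_bound (a b : ℝ) (hb0 : 0 < b) (hb1 : b ≤ 1) (ha : a^2 ≤ 4*b) (y : ℕ → ℝ)
    (hy : ∀ t : ℕ, 1 ≤ t → y (t+1) = a * y t - b * y (t-1)) :
    ∀ n : ℕ, (y (n+1))^2 ≤ 2*(n+1)^2*b^n*((y 1)^2 + (y 0)^2) := by
  have hsb : 0 < Real.sqrt b := Real.sqrt_pos.2 hb0
  have hsb2 : Real.sqrt b ^ 2 = b := Real.sq_sqrt hb0.le
  have hsb1 : Real.sqrt b ≤ 1 := by nlinarith [hsb2, hsb]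
  set c := a/(2*Real.sqrt b) with hc
  have hc1 : |c| ≤ 1 := by
    have hcsq : c^2 ≤ 1 := by
      rw [hc, div_pow]
      rw [div_le_one (by positivity)]
      nlinarith [hsb2]
    refine abs_le.mpr ⟨?_, ?_⟩ <;> nlinarith [sq_nonneg (c+1), sq_nonneg (c-1)]
  intro n
  have hform := scalar_form a b hb0 y hy n
  have hs1 : |chebS c (n+1)| ≤ (n+1:ℕ) := chebS_abs_le c hc1 (n+1)
  have hs0 : |chebS c n| ≤ n := chebS_abs_le c hc1 n
  have hs1' : (chebS c (n+1))^2 ≤ ((n:ℝ)+1)^2 := by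
    have := sq_le_sq' (neg_le_of_abs_le hs1) (le_of_abs_le hs1); push_cast at this ⊢; linarith
  have hs0' : (chebS c n)^2 ≤ (n:ℝ)^2 := by
    have := sq_le_sq' (neg_le_of_abs_le hs0) (le_of_abs_le hs0); push_cast at this ⊢; linarith
  rw [hform]
  have hpow : ((Real.sqrt b)^n)^2 = b^n := by rw [← pow_mul, mul_comm n 2, pow_mul, hsb2]
  have hbn : (0:ℝ) ≤ b^n := by positivity
  have expand : ((Real.sqrt b)^n * (y 1 * chebS c (n+1) - Real.sqrt b * y 0 * chebS c n))^2
      = b^n * (y 1 * chebS c (n+1) - Real.sqrt b * y 0 * chebS c n)^2 := by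
    rw [mul_pow, hpow]
  rw [expand]
  have core : (y 1 * chebS c (n+1) - Real.sqrt b * y 0 * chebS c n)^2
      ≤ 2*((n:ℝ)+1)^2*((y 1)^2 + (y 0)^2) := by
    nlinarith [sq_nonneg (y 1 * chebS c (n+1) + Real.sqrt b * y 0 * chebS c n),
      sq_nonneg (y 1), sq_nonneg (y 0), sq_nonneg (Real.sqrt b * y 0), hsb2,
      mul_le_mul_of_nonneg_left hs1' (sq_nonneg (y 1)),
      mul_le_mul_of_nonneg_left hs0' (sq_nonneg (Real.sqrt b * y 0)),
      sq_nonneg (y 0 * chebS c n), hsb.le, hsb1]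
  calc b^n * (y 1 * chebS c (n+1) - Real.sqrt b * y 0 * chebS c n)^2
      ≤ b^n * (2*((n:ℝ)+1)^2*((y 1)^2 + (y 0)^2)) := by gcongr
    _ = 2*((n:ℝ)+1)^2*b^n*((y 1)^2 + (y 0)^2) := by ring

lemma partB (b : ℝ) (hb0 : 0 < b) (hb1 : b ≤ 1) (t : ℕ) (ht : 1 ≤ t) :
    4*((t:ℝ)+1)^2 * b^(t-1) ≤
      ((3:ℝ) ^ ((Real.log t / Real.log 2 + 1) * (Real.log t / Real.log 2 + 1 + 1)) *
        (1 + 4*b + b^2) ^ (2 * (Real.log t / Real.log 2 + 1))) *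
      b ^ ((t:ℝ) - 2 * (Real.log t / Real.log 2 + 1)) := by
  have ht' : (1:ℝ) ≤ (t:ℝ) := by exact_mod_cast ht
  have ht0 : (0:ℝ) < (t:ℝ) := by linarith
  set L : ℝ := Real.log t / Real.log 2 + 1 with hL
  have hlog2 : 0 < Real.log 2 := Real.log_pos one_lt_two
  have hL1 : 1 ≤ L := by
    have : 0 ≤ Real.log t / Real.log 2 := div_nonneg (Real.log_nonneg ht') hlog2.le
    rw [hL]; linarith
  have hsplit : b ^ ((t:ℝ) - 2*L) = b^(t-1) * b^(1 - 2*L) := by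
    have h1 : (t:ℝ) - 2*L = ((t-1:ℕ):ℝ) + (1 - 2*L) := by
      have h2 : ((t-1:ℕ):ℝ) = (t:ℝ) - 1 := by
        push_cast [Nat.cast_sub ht]; ring
      rw [h2]; ring
    rw [h1, Real.rpow_add hb0, Real.rpow_natCast]
  rw [hsplit]
  have hbt : (0:ℝ) < b^(t-1) := by positivity
  -- core inequality
  have h1 : 4*Real.sqrt b ≤ 1+4*b+b^2 := by
    nlinarith [sq_nonneg (1-2*Real.sqrt b), Real.sq_sqrt hb0.le, sq_nonneg b]
  have h4sb : (0:ℝ) ≤ 4*Real.sqrt b := by positivity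
  have h2 : (4*Real.sqrt b)^(2*L) ≤ (1+4*b+b^2)^(2*L) :=
    Real.rpow_le_rpow h4sb h1 (by linarith)
  have e1 : (4:ℝ)^(2*L) = 16^L := by
    rw [Real.rpow_mul (by norm_num : (0:ℝ) ≤ 4) 2 L,
      show (2:ℝ) = ((2:ℕ):ℝ) by norm_num, Real.rpow_natCast]
    norm_num
  have e2 : (Real.sqrt b)^(2*L) = b^L := by
    rw [Real.sqrt_eq_rpow, ← Real.rpow_mul hb0.le]
    congr 1; ring
  have h3 : (4*Real.sqrt b)^(2*L) = 16^L * b^L := by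
    rw [Real.mul_rpow (by norm_num) (Real.sqrt_nonneg b), e1, e2]
  have h5 : b^L * b^(1-2*L) = b^(1-L) := by
    rw [← Real.rpow_add hb0]; congr 1; ring
  have h6 : (1:ℝ) ≤ b^(1-L) :=
    Real.one_le_rpow_of_pos_of_le_one_of_nonpos hb0 hb1 (by linarith)
  have h7 : (1:ℝ) ≤ (3:ℝ)^(L*(L+1)) :=
    Real.one_le_rpow (by norm_num) (by nlinarith)
  have h8 : (16:ℝ)^L = 16 * (t:ℝ)^4 := by
    rw [hL, Real.rpow_add (by norm_num : (0:ℝ) < 16), Real.rpow_one]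
    have h81 : (16:ℝ)^(Real.log t/Real.log 2) = (t:ℝ)^4 := by
      rw [Real.rpow_def_of_pos (by norm_num : (0:ℝ) < 16)]
      have hl16 : Real.log 16 = 4 * Real.log 2 := by
        rw [show (16:ℝ) = 2^4 by norm_num, Real.log_pow]; push_cast; ring
      rw [hl16, show 4 * Real.log 2 * (Real.log (t:ℝ) / Real.log 2) = 4 * Real.log (t:ℝ) by
        field_simp]
      rw [show (4:ℝ) * Real.log (t:ℝ) = ((4:ℕ):ℝ) * Real.log (t:ℝ) by norm_num,
        Real.exp_nat_mul, Real.exp_log ht0]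
    rw [h81]; ring
  have h9 : 4*((t:ℝ)+1)^2 ≤ 16*(t:ℝ)^4 := by
    nlinarith [ht', sq_nonneg ((t:ℝ)-1), sq_nonneg ((t:ℝ)^2-1), sq_nonneg (t:ℝ)]
  have hmid : (0:ℝ) ≤ (1+4*b+b^2)^(2*L) := Real.rpow_nonneg (by nlinarith) _
  have hb12L : (0:ℝ) ≤ b^(1-2*L) := Real.rpow_nonneg hb0.le _
  have core : 4*((t:ℝ)+1)^2 ≤ (3:ℝ)^(L*(L+1)) * (1+4*b+b^2)^(2*L) * b^(1-2*L) := by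
    calc 4*((t:ℝ)+1)^2 ≤ 16*(t:ℝ)^4 := h9
      _ = (16:ℝ)^L := h8.symm
      _ ≤ (16:ℝ)^L * b^(1-L) :=
          le_mul_of_one_le_right (Real.rpow_nonneg (by norm_num) _) h6
      _ = ((16:ℝ)^L * b^L) * b^(1-2*L) := by rw [mul_assoc, h5]
      _ ≤ (1+4*b+b^2)^(2*L) * b^(1-2*L) := by
          apply mul_le_mul_of_nonneg_right _ hb12L
          rw [← h3]; exact h2
      _ ≤ (3:ℝ)^(L*(L+1)) * ((1+4*b+b^2)^(2*L) * b^(1-2*L)) :=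
          le_mul_of_one_le_left (mul_nonneg hmid hb12L) h7
      _ = (3:ℝ)^(L*(L+1)) * (1+4*b+b^2)^(2*L) * b^(1-2*L) := by ring
  calc 4*((t:ℝ)+1)^2 * b^(t-1)
      ≤ ((3:ℝ)^(L*(L+1)) * (1+4*b+b^2)^(2*L) * b^(1-2*L)) * b^(t-1) :=
        mul_le_mul_of_nonneg_right core hbt.le
    _ = ((3:ℝ)^(L*(L+1)) * (1+4*b+b^2)^(2*L)) * (b^(t-1) * b^(1-2*L)) := by ring

set_option maxHeartbeats 1600000 in
theorem partA {d : ℕ} (X : Matrix (Fin d) (Fin d) ℝ)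
    (lam Lam : ℝ) (hlam : 0 < lam) (hlamLam : lam < Lam)
    (hlow : (X - lam • (1 : Matrix (Fin d) (Fin d) ℝ)).PosSemidef)
    (hup : ((Lam • (1 : Matrix (Fin d) (Fin d) ℝ)) - X).PosSemidef)
    (z : ℕ → Fin d → ℝ)
    (hz : ∀ t : ℕ, 1 ≤ t → z (t + 1) =
      (1 + ((Real.sqrt Lam - Real.sqrt lam) / (Real.sqrt Lam + Real.sqrt lam)) ^ 2) • z t
        - (4 / (Real.sqrt lam + Real.sqrt Lam) ^ 2) • X.mulVec (z t)
        - ((Real.sqrt Lam - Real.sqrt lam) / (Real.sqrt Lam + Real.sqrt lam)) ^ 2 • z (t - 1)) :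
    ∀ n : ℕ, z (n+2) ⬝ᵥ z (n+2) + z (n+1) ⬝ᵥ z (n+1) ≤
      4 * (n+2:ℝ)^2 * (((Real.sqrt Lam - Real.sqrt lam) / (Real.sqrt Lam + Real.sqrt lam)) ^ 2)^n
        * (z 1 ⬝ᵥ z 1 + z 0 ⬝ᵥ z 0) := by
  set p := Real.sqrt lam with hp
  set q := Real.sqrt Lam with hq
  have hp0 : 0 < p := Real.sqrt_pos.2 hlam
  have hq0 : 0 < q := Real.sqrt_pos.2 (hlam.trans hlamLam)
  have hpq : p < q := Real.sqrt_lt_sqrt hlam.le hlamLam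
  have hqp0 : 0 < q - p := sub_pos.2 hpq
  have hp2 : p^2 = lam := Real.sq_sqrt hlam.le
  have hq2 : q^2 = Lam := Real.sq_sqrt (hlam.trans hlamLam).le
  set b := ((q - p)/(q + p))^2 with hb
  set mu := (4 / (p + q)^2) with hmu
  have hb0 : 0 < b := by rw [hb]; positivity
  have hb1 : b ≤ 1 := by
    rw [hb, div_pow, div_le_one (by positivity)]
    nlinarith [hp0, hq0]
  -- Hermitian
  have hX : X.IsHermitian := by
    have h1 : (X - lam • (1 : Matrix (Fin d) (Fin d) ℝ)).IsHermitian := hlow.1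
    have h2 : (lam • (1 : Matrix (Fin d) (Fin d) ℝ)).IsHermitian := by
      unfold Matrix.IsHermitian; simp
    have h3 := h1.add h2
    simpa using h3
  set U : Matrix (Fin d) (Fin d) ℝ := (hX.eigenvectorUnitary : Matrix (Fin d) (Fin d) ℝ) with hU
  set ev : Fin d → ℝ := hX.eigenvalues with hev
  have hUU : U * star U = 1 := (Matrix.mem_unitaryGroup_iff).mp hX.eigenvectorUnitary.2
  have hUU' : star U * U = 1 := (Matrix.mem_unitaryGroup_iff').mp hX.eigenvectorUnitary.2
  have hspec : X = U * Matrix.diagonal ev * star U := hX.spectral_theorem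
  -- eigenvalue bounds
  have hev_bounds : ∀ i, lam ≤ ev i ∧ ev i ≤ Lam := by
    intro i
    set v : Fin d → ℝ := ⇑(hX.eigenvectorBasis i) with hv
    have hXv : X *ᵥ v = ev i • v := hX.mulVec_eigenvectorBasis i
    have hvv : v ⬝ᵥ v = 1 := by
      have hnorm := hX.eigenvectorBasis.orthonormal.1 i
      have he : (dotProduct v v) = ‖hX.eigenvectorBasis i‖^2 := by
        rw [EuclideanSpace.norm_eq, Real.sq_sqrt (Finset.sum_nonneg (fun j _ => sq_nonneg _))]
        simp [dotProduct, hv, sq]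
      rw [he, hnorm]; norm_num
    have hstar : star v = v := by funext j; simp
    constructor
    · have h1 := hlow.dotProduct_mulVec_nonneg v
      have h2 : (X - lam • (1 : Matrix (Fin d) (Fin d) ℝ)) *ᵥ v = (ev i - lam) • v := by
        rw [Matrix.sub_mulVec, hXv, Matrix.smul_mulVec, Matrix.one_mulVec, sub_smul]
      rw [h2, hstar, dotProduct_smul, hvv] at h1
      simpa using h1
    · have h1 := hup.dotProduct_mulVec_nonneg v
      have h2 : ((Lam • (1 : Matrix (Fin d) (Fin d) ℝ)) - X) *ᵥ v = (Lam - ev i) • v := by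
        rw [Matrix.sub_mulVec, hXv, Matrix.smul_mulVec, Matrix.one_mulVec, sub_smul]
      rw [h2, hstar, dotProduct_smul, hvv] at h1
      simp at h1
      linarith
  -- the diagonalized sequence
  set w : ℕ → Fin d → ℝ := fun t => (star U) *ᵥ z t with hwdef
  have hstarU : star U = Uᵀ := by funext i j; simp [Matrix.star_apply]
  have hUUt : U * Uᵀ = 1 := by rw [← hstarU]; exact hUU
  have hwz : ∀ t, w t ⬝ᵥ w t = z t ⬝ᵥ z t := by
    intro t
    show (star U *ᵥ z t) ⬝ᵥ (star U *ᵥ z t) = z t ⬝ᵥ z t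
    rw [hstarU, Matrix.dotProduct_mulVec, Matrix.vecMul_transpose, Matrix.mulVec_mulVec,
      hUUt, Matrix.one_mulVec]
  have hcomm : star U * X = Matrix.diagonal ev * star U := by
    conv_lhs => rw [hspec]
    rw [← Matrix.mul_assoc, ← Matrix.mul_assoc, hUU', Matrix.one_mul]
  -- componentwise recurrence
  have hrec : ∀ i, ∀ t : ℕ, 1 ≤ t →
      w (t+1) i = (1 + b - mu * ev i) * w t i - b * w (t-1) i := by
    intro i t ht
    have h1 : w (t+1) = star U *ᵥ ((1 + b) • z t - mu • (X *ᵥ z t) - b • z (t-1)) := by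
      show star U *ᵥ z (t+1) = _
      rw [hz t ht]
    have h2 : star U *ᵥ (X *ᵥ z t) = Matrix.diagonal ev *ᵥ w t := by
      rw [Matrix.mulVec_mulVec, hcomm, ← Matrix.mulVec_mulVec]
    rw [Matrix.mulVec_sub, Matrix.mulVec_sub, Matrix.mulVec_smul, Matrix.mulVec_smul,
      Matrix.mulVec_smul, h2] at h1
    have h3 := congrFun h1 i
    simp only [Pi.sub_apply, Pi.smul_apply, smul_eq_mul, Matrix.mulVec_diagonal] at h3
    show w (t+1) i = _
    rw [h3]; ring
  -- the per-coordinate quadratic bound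
  have key : ∀ i, ∀ n : ℕ, (w (n+1) i)^2 ≤ 2*(n+1:ℝ)^2*b^n*((w 1 i)^2 + (w 0 i)^2) := by
    intro i
    have hevi := hev_bounds i
    have hmu0 : 0 < mu := by rw [hmu]; positivity
    have e1 : 1 + b - mu * lam = 2*((q-p)/(q+p)) := by
      rw [hb, hmu, ← hp2]; field_simp; ring
    have e2 : 1 + b - mu * Lam = -(2*((q-p)/(q+p))) := by
      rw [hb, hmu, ← hq2]; field_simp; ring
    have ha : (1 + b - mu * ev i)^2 ≤ 4*b := by
      have hle : 1 + b - mu * ev i ≤ 2*((q-p)/(q+p)) := by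
        rw [← e1]; nlinarith [hevi.1]
      have hge : -(2*((q-p)/(q+p))) ≤ 1 + b - mu * ev i := by
        rw [← e2]; nlinarith [hevi.2]
      have h4 : (2*((q-p)/(q+p)))^2 = 4*b := by rw [hb]; ring
      nlinarith [hle, hge]
    exact scalar_bound (1 + b - mu * ev i) b hb0 hb1 ha (fun t => w t i) (hrec i)
  -- sum up
  intro n
  clear_value w U ev
  clear hz hev hU hwdef hX
  clear_value b mu p q
  rw [← hwz, ← hwz, ← hwz, ← hwz]
  have hsum : ∀ u v : Fin d → ℝ, u ⬝ᵥ u + v ⬝ᵥ v = ∑ i, ((u i)^2 + (v i)^2) := by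
    intro u v
    simp [dotProduct, Finset.sum_add_distrib, sq]
  rw [hsum, hsum]
  have hbn : (0:ℝ) ≤ b^n := by positivity
  calc ∑ i, ((w (n+2) i)^2 + (w (n+1) i)^2)
      ≤ ∑ i, (4*(n+2:ℝ)^2*b^n*((w 1 i)^2 + (w 0 i)^2)) := by
        apply Finset.sum_le_sum
        intro i _
        have k1 := key i (n+1)
        have k0 := key i n
        have hS : (0:ℝ) ≤ (w 1 i)^2 + (w 0 i)^2 := by positivity
        have hbsucc : b^(n+1) ≤ b^n := by rw [pow_succ]; exact mul_le_of_le_one_right hbn hb1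
        have k1' : (w (n+2) i)^2 ≤ 2*((n:ℝ)+2)^2*b^n*((w 1 i)^2 + (w 0 i)^2) := by
          refine k1.trans ?_
          have h5 : ((n:ℝ)+1+1) = (n:ℝ)+2 := by ring
          push_cast
          rw [h5]
          have := mul_le_mul_of_nonneg_right
            (mul_le_mul_of_nonneg_left hbsucc (by positivity : (0:ℝ) ≤ 2*((n:ℝ)+2)^2)) hS
          calc 2*((n:ℝ)+2)^2*b^(n+1)*((w 1 i)^2 + (w 0 i)^2)
              = 2*((n:ℝ)+2)^2*b^(n+1)*((w 1 i)^2 + (w 0 i)^2) := rfl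
            _ ≤ 2*((n:ℝ)+2)^2*b^n*((w 1 i)^2 + (w 0 i)^2) := by
                  calc 2*((n:ℝ)+2)^2*b^(n+1)*((w 1 i)^2 + (w 0 i)^2)
                      = 2*((n:ℝ)+2)^2*b^(n+1)*((w 1 i)^2 + (w 0 i)^2) := rfl
                    _ ≤ _ := this
        have k0' : (w (n+1) i)^2 ≤ 2*((n:ℝ)+2)^2*b^n*((w 1 i)^2 + (w 0 i)^2) := by
          refine k0.trans ?_
          have h6 : 2*((n:ℝ)+1)^2 ≤ 2*((n:ℝ)+2)^2 := by nlinarith [(Nat.cast_nonneg n : (0:ℝ) ≤ n)]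
          exact mul_le_mul_of_nonneg_right (mul_le_mul_of_nonneg_right h6 hbn) hS
        push_cast
        linarith
    _ = 4*(n+2:ℝ)^2*b^n*(∑ i, ((w 1 i)^2 + (w 0 i)^2)) := by
        rw [Finset.mul_sum]

set_option maxHeartbeats 800000 in
/-- Finite-time guarantee for the heavy-ball dynamical system
`z_{t+1} = (1+β)z_t - μXz_t - βz_{t-1}` with `λI ⪯ X ⪯ ΛI`,
`μ = 4/(√λ+√Λ)²`, `β = ((√Λ-√λ)/(√Λ+√λ))²`. -/
theorem stmt17 {d : ℕ} (X : Matrix (Fin d) (Fin d) ℝ)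
    (lam Lam : ℝ) (hlam : 0 < lam) (hlamLam : lam < Lam)
    (hlow : (X - lam • (1 : Matrix (Fin d) (Fin d) ℝ)).PosSemidef)
    (hup : ((Lam • (1 : Matrix (Fin d) (Fin d) ℝ)) - X).PosSemidef)
    (z : ℕ → Fin d → ℝ)
    (hz : ∀ t : ℕ, 1 ≤ t → z (t + 1) =
      (1 + ((Real.sqrt Lam - Real.sqrt lam) / (Real.sqrt Lam + Real.sqrt lam)) ^ 2) • z t
        - (4 / (Real.sqrt lam + Real.sqrt Lam) ^ 2) • X.mulVec (z t)
        - ((Real.sqrt Lam - Real.sqrt lam) / (Real.sqrt Lam + Real.sqrt lam)) ^ 2 • z (t - 1))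
    (h0 : 0 < z 1 ⬝ᵥ z 1 + z 0 ⬝ᵥ z 0) :
    ∀ t : ℕ, 1 ≤ t →
      (z (t + 1) ⬝ᵥ z (t + 1) + z t ⬝ᵥ z t) / (z 1 ⬝ᵥ z 1 + z 0 ⬝ᵥ z 0) ≤
        ((3 : ℝ) ^ ((Real.log t / Real.log 2 + 1) * (Real.log t / Real.log 2 + 1 + 1)) *
            (1 + 4 * ((Real.sqrt Lam - Real.sqrt lam) / (Real.sqrt Lam + Real.sqrt lam)) ^ 2
              + (((Real.sqrt Lam - Real.sqrt lam) / (Real.sqrt Lam + Real.sqrt lam)) ^ 2) ^ 2)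
              ^ (2 * (Real.log t / Real.log 2 + 1))) *
          (((Real.sqrt Lam - Real.sqrt lam) / (Real.sqrt Lam + Real.sqrt lam)) ^ 2)
            ^ ((t : ℝ) - 2 * (Real.log t / Real.log 2 + 1)) := by
  intro t ht
  obtain ⟨n, rfl⟩ : ∃ n, t = n + 1 := ⟨t - 1, by omega⟩
  set p := Real.sqrt lam with hp
  set q := Real.sqrt Lam with hq
  have hp0 : 0 < p := Real.sqrt_pos.2 hlam
  have hq0 : 0 < q := Real.sqrt_pos.2 (hlam.trans hlamLam)
  have hpq : p < q := Real.sqrt_lt_sqrt hlam.le hlamLam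
  have hqp0 : 0 < q - p := sub_pos.2 hpq
  set b := ((q - p)/(q + p))^2 with hb
  have hb0 : 0 < b := by rw [hb]; positivity
  have hb1 : b ≤ 1 := by
    rw [hb, div_pow, div_le_one (by positivity)]
    nlinarith [hp0, hq0]
  have hA := partA X lam Lam hlam hlamLam hlow hup z hz n
  rw [div_le_iff₀ h0]
  have hcast : 4*((n:ℝ)+2)^2*b^n = 4*((↑(n+1):ℝ)+1)^2 * b^((n+1)-1) := by
    push_cast [Nat.add_sub_cancel]; ring
  have hB := partB b hb0 hb1 (n+1) (by omega)
  rw [← hcast] at hB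
  calc z (n+1+1) ⬝ᵥ z (n+1+1) + z (n+1) ⬝ᵥ z (n+1)
      ≤ 4*((n:ℝ)+2)^2*b^n * (z 1 ⬝ᵥ z 1 + z 0 ⬝ᵥ z 0) := hA
    _ ≤ _ := mul_le_mul_of_nonneg_right hB h0.le
end
end

section
/- Let ρ ∈ (0,1) and let S ∈ ℝ^{m×n} be any matrix such that ‖C_S − I_d‖₂ ≤ √ρ. Set μ_ρ = 2(1−ρ)/(1+√(1−ρ)) and β_ρ = (1−√(1−ρ))/(1+√(1−ρ)). Let (x_t)_{t≥0} satisfy the heavy-ball (Polyak-IHS) recursion x_{t+1} = x_t − μ_ρ · H_S⁻¹∇f(x_t) + β_ρ · (x_t − x_{t−1}) for t ≥ 1, with δ_{x_1} + δ_{x_0} > 0. Then for every t ≥ 1, (δ_{x_{t+1}} + δ_{x_t})/(δ_{x_1} + δ_{x_0}) ≤ α(t,ρ) · β_ρ^{ω(t)}, where ν(t) = log(t)/log(2) + 1, ω(t) = t − 2ν(t), and α(t,ρ) = 3^{ν(t)(ν(t)+1)} · (1 + 4β_ρ + β_ρ²)^{2ν(t)}. -/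
open Matrix MeasureTheory ProbabilityTheory Real Polynomial
open scoped Classical

noncomputable section

def chebRec (a β : ℝ) : ℕ → ℝ
  | 0 => 0
  | 1 => 1
  | (k+2) => a * chebRec a β (k+1) - β * chebRec a β k

lemma chebRec_invariant (a β : ℝ) (k : ℕ) :
    (chebRec a β (k+1))^2 - a * chebRec a β (k+1) * chebRec a β k
      + β * (chebRec a β k)^2 = β ^ k := by
  induction k with
  | zero => simp [chebRec]
  | succ k ih =>
    have h : chebRec a β (k+2) = a * chebRec a β (k+1) - β * chebRec a β k := rfl
    rw [h, pow_succ]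
    linear_combination β * ih

lemma chebRec_bound (a β : ℝ) (hβ : 0 ≤ β) (ha : |a| ≤ 2 * Real.sqrt β) (k : ℕ) :
    |chebRec a β k| ≤ k * Real.sqrt β ^ (k - 1) := by
  set q := Real.sqrt β with hq
  have hq0 : 0 ≤ q := Real.sqrt_nonneg β
  have hq2 : q ^ 2 = β := Real.sq_sqrt hβ
  have step : ∀ k : ℕ, |chebRec a β (k+1)| ≤ q * |chebRec a β k| + q ^ k := by
    intro k
    have inv := chebRec_invariant a β k
    have habs : a * chebRec a β (k+1) * chebRec a β k
        ≤ 2 * q * (|chebRec a β (k+1)| * |chebRec a β k|) := by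
      calc a * chebRec a β (k+1) * chebRec a β k
          ≤ |a * chebRec a β (k+1) * chebRec a β k| := le_abs_self _
        _ = |a| * (|chebRec a β (k+1)| * |chebRec a β k|) := by
            rw [abs_mul, abs_mul]; ring
        _ ≤ 2 * q * (|chebRec a β (k+1)| * |chebRec a β k|) := by
            apply mul_le_mul_of_nonneg_right ha
            positivity
    have h1 : (|chebRec a β (k+1)| - q * |chebRec a β k|) ^ 2 ≤ (q ^ k) ^ 2 := by
      have e1 := sq_abs (chebRec a β (k+1))
      have e2 := sq_abs (chebRec a β k)
      have hβk : β ^ k = (q ^ k) ^ 2 := by rw [← hq2]; ring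
      nlinarith [inv]
    have h2 : |chebRec a β (k+1)| - q * |chebRec a β k| ≤ q ^ k := by
      nlinarith [h1, pow_nonneg hq0 k]
    linarith
  induction k with
  | zero => simp [chebRec]
  | succ k ih =>
    calc |chebRec a β (k+1)| ≤ q * |chebRec a β k| + q ^ k := step k
      _ ≤ q * (↑k * q ^ (k-1)) + q ^ k := by
          exact add_le_add_left (mul_le_mul_of_nonneg_left ih hq0) _
      _ ≤ (↑(k+1)) * q ^ ((k+1) - 1) := by
          rcases Nat.eq_zero_or_pos k with hk | hk
          · subst hk; simp
          · have hqe : q * q ^ (k-1) = q ^ k := by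
              rw [← pow_succ']
              congr 1
              omega
            have hqe' : q ^ (k-1) * q = q ^ k := by rw [mul_comm]; exact hqe
            rw [mul_comm q (↑k * q ^ (k-1)), mul_assoc, hqe']
            have hks : k + 1 - 1 = k := by omega
            rw [hks]
            push_cast
            nlinarith [pow_nonneg hq0 k]

lemma rec_repr (a β : ℝ) (c : ℕ → ℝ) (hc : ∀ k, c (k+2) = a * c (k+1) - β * c k) :
    ∀ k, c (k+1) = chebRec a β (k+1) * c 1 - β * chebRec a β k * c 0 := by
  intro k
  induction k using Nat.twoStepInduction with
  | zero => simp [chebRec]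
  | one => rw [hc 0]; simp [chebRec]
  | more k ih1 ih2 =>
    rw [hc (k+1), ih1, ih2]
    have h1 : chebRec a β (k+3) = a * chebRec a β (k+2) - β * chebRec a β (k+1) := rfl
    have h2 : chebRec a β (k+2) = a * chebRec a β (k+1) - β * chebRec a β k := rfl
    rw [h1, h2]
    ring

lemma coord_bound (a β : ℝ) (hβ0 : 0 < β) (hβ1 : β ≤ 1) (ha : |a| ≤ 2 * Real.sqrt β)
    (c : ℕ → ℝ) (hc : ∀ k, c (k+2) = a * c (k+1) - β * c k) (k : ℕ) :
    c (k+1)^2 ≤ 2 * ((k:ℝ)+1)^2 * β^k * (c 1^2 + c 0^2) := by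
  set q := Real.sqrt β with hq
  have hq0 : 0 ≤ q := Real.sqrt_nonneg β
  have hq1 : q ≤ 1 := Real.sqrt_le_one.mpr hβ1
  have hq2 : q ^ 2 = β := Real.sq_sqrt hβ0.le
  have key : |c (k+1)| ≤ (↑k+1) * q^k * (|c 1| + |c 0|) := by
    rw [rec_repr a β c hc k]
    have b1 : |chebRec a β (k+1)| ≤ (↑k+1) * q^k := by
      have := chebRec_bound a β hβ0.le ha (k+1)
      simpa using this
    have b2 : β * |chebRec a β k| ≤ (↑k+1) * q^k := by
      rcases Nat.eq_zero_or_pos k with hk | hk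
      · subst hk; simp [chebRec]
      · have hb := chebRec_bound a β hβ0.le ha k
        have h1 : β * q^(k-1) = q^(k+1) := by
          rw [← hq2, ← pow_add]
          congr 1
          omega
        have h2 : q^(k+1) ≤ q^k := pow_le_pow_of_le_one hq0 hq1 (by omega)
        have hk0 : (0:ℝ) ≤ ↑k := by positivity
        calc β * |chebRec a β k| ≤ β * (↑k * q^(k-1)) := by
              apply mul_le_mul_of_nonneg_left hb hβ0.le
          _ = ↑k * (β * q^(k-1)) := by ring
          _ = ↑k * q^(k+1) := by rw [h1]
          _ ≤ ↑k * q^k := by apply mul_le_mul_of_nonneg_left h2 hk0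
          _ ≤ (↑k+1) * q^k := by
              apply mul_le_mul_of_nonneg_right _ (pow_nonneg hq0 k)
              linarith
    calc |chebRec a β (k+1) * c 1 - β * chebRec a β k * c 0|
        ≤ |chebRec a β (k+1)| * |c 1| + β * |chebRec a β k| * |c 0| := by
          refine (abs_sub _ _).trans ?_
          rw [abs_mul, abs_mul, abs_mul, abs_of_nonneg hβ0.le]
      _ ≤ ((↑k+1) * q^k) * |c 1| + ((↑k+1) * q^k) * |c 0| := by
          apply add_le_add
          · exact mul_le_mul_of_nonneg_right b1 (abs_nonneg _)
          · exact mul_le_mul_of_nonneg_right b2 (abs_nonneg _)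
      _ = (↑k+1) * q^k * (|c 1| + |c 0|) := by ring
  have hsq : (c (k+1))^2 ≤ ((↑k+1) * q^k * (|c 1| + |c 0|))^2 := by
    rw [← sq_abs]
    apply pow_le_pow_left₀ (abs_nonneg _) key
  calc (c (k+1))^2 ≤ ((↑k+1) * q^k * (|c 1| + |c 0|))^2 := hsq
    _ = (↑k+1)^2 * β^k * (|c 1| + |c 0|)^2 := by
        have : (q^k)^2 = β^k := by rw [← pow_mul, mul_comm, pow_mul, hq2]
        rw [mul_pow, mul_pow, this]
    _ ≤ (↑k+1)^2 * β^k * (2 * (c 1^2 + c 0^2)) := by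
        apply mul_le_mul_of_nonneg_left _ (by positivity)
        nlinarith [sq_abs (c 1), sq_abs (c 0), sq_nonneg (|c 1| - |c 0|)]
    _ = 2 * (↑k+1)^2 * β^k * (c 1^2 + c 0^2) := by push_cast; ring

lemma scalar_bound_s18 (a β : ℝ) (hβ0 : 0 < β) (hβ1 : β ≤ 1) (ha : |a| ≤ 2 * Real.sqrt β)
    (c : ℕ → ℝ) (hc : ∀ k, c (k+2) = a * c (k+1) - β * c k) (t : ℕ) (ht : 1 ≤ t) :
    c (t+1)^2 + c t^2 ≤ 4 * ((t:ℝ)+1)^2 * β^(t-1) * (c 1^2 + c 0^2) := by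
  have hβk : β^t ≤ β^(t-1) := pow_le_pow_of_le_one hβ0.le hβ1 (by omega)
  have hcc : (0:ℝ) ≤ c 1^2 + c 0^2 := by positivity
  have h1 : c (t+1)^2 ≤ 2 * ((t:ℝ)+1)^2 * β^(t-1) * (c 1^2 + c 0^2) := by
    refine (coord_bound a β hβ0 hβ1 ha c hc t).trans ?_
    have : (2:ℝ) * ((t:ℝ)+1)^2 * β^t ≤ 2 * ((t:ℝ)+1)^2 * β^(t-1) := by
      apply mul_le_mul_of_nonneg_left hβk (by positivity)
    exact mul_le_mul_of_nonneg_right this hcc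
  obtain ⟨s, rfl⟩ : ∃ s, t = s + 1 := ⟨t - 1, by omega⟩
  have hs : s + 1 - 1 = s := by omega
  have h2 : c (s+1)^2 ≤ 2 * ((↑(s+1):ℝ)+1)^2 * β^(s+1-1) * (c 1^2 + c 0^2) := by
    refine (coord_bound a β hβ0 hβ1 ha c hc s).trans ?_
    rw [hs]
    apply mul_le_mul_of_nonneg_right _ hcc
    apply mul_le_mul_of_nonneg_right _ (by positivity)
    apply mul_le_mul_of_nonneg_left _ (by norm_num)
    push_cast
    have hs0 : (0:ℝ) ≤ (s:ℝ) := Nat.cast_nonneg s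
    nlinarith [hs0]
  push_cast at h1 h2 ⊢
  linarith


lemma norm_sq_ob {d : ℕ} (b : OrthonormalBasis (Fin d) ℝ (EuclideanSpace ℝ (Fin d)))
    (v : EuclideanSpace ℝ (Fin d)) :
    ‖v‖^2 = ∑ i, (inner ℝ (b i) v : ℝ)^2 := by
  have h1 : ‖v‖ = ‖b.repr v‖ := (b.repr.norm_map v).symm
  rw [h1, EuclideanSpace.norm_eq, Real.sq_sqrt (by positivity)]
  congr 1
  ext i
  rw [b.repr_apply_apply, Real.norm_eq_abs, sq_abs]

lemma op_bound {d : ℕ} (T : EuclideanSpace ℝ (Fin d) →ₗ[ℝ] EuclideanSpace ℝ (Fin d))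
    (hT : T.IsSymmetric) (β : ℝ) (hβ0 : 0 < β) (hβ1 : β ≤ 1)
    (heig : ∀ (μ : ℝ) (v : EuclideanSpace ℝ (Fin d)), v ≠ 0 → T v = μ • v →
      |μ| ≤ 2 * Real.sqrt β)
    (e : ℕ → EuclideanSpace ℝ (Fin d))
    (he : ∀ k : ℕ, e (k+2) = T (e (k+1)) - β • e k) (t : ℕ) (ht : 1 ≤ t) :
    ‖e (t+1)‖^2 + ‖e t‖^2 ≤ 4 * ((t:ℝ)+1)^2 * β^(t-1) * (‖e 1‖^2 + ‖e 0‖^2) := by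
  have hfin : Module.finrank ℝ (EuclideanSpace ℝ (Fin d)) = d := finrank_euclideanSpace_fin
  set b := hT.eigenvectorBasis hfin with hb
  set μ := hT.eigenvalues hfin with hμ
  have hTb : ∀ i, T (b i) = μ i • b i := fun i => by
    have h := hT.apply_eigenvectorBasis hfin i
    exact_mod_cast h
  have hμb : ∀ i, |μ i| ≤ 2 * Real.sqrt β := fun i => by
    refine heig (μ i) (b i) ?_ (hTb i)
    exact b.toBasis.ne_zero i
  set c : Fin d → ℕ → ℝ := fun i k => (inner ℝ (b i) (e k) : ℝ) with hc
  have hrec : ∀ i k, c i (k+2) = μ i * c i (k+1) - β * c i k := by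
    intro i k
    simp only [hc, he k, inner_sub_right, real_inner_smul_right]
    congr 1
    rw [← hT (b i) (e (k+1)), hTb i, real_inner_smul_left]
  have hsum : ∀ k, ‖e k‖^2 = ∑ i, (c i k)^2 := fun k => norm_sq_ob b (e k)
  rw [hsum, hsum, hsum, hsum]
  calc (∑ i, c i (t+1)^2) + (∑ i, c i t^2) = ∑ i, (c i (t+1)^2 + c i t^2) :=
        (Finset.sum_add_distrib).symm
    _ ≤ ∑ i, 4 * ((t:ℝ)+1)^2 * β^(t-1) * (c i 1^2 + c i 0^2) :=
        Finset.sum_le_sum fun i _ => scalar_bound_s18 (μ i) β hβ0 hβ1 (hμb i) (c i) (hrec i) t ht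
    _ = 4 * ((t:ℝ)+1)^2 * β^(t-1) * ((∑ i, c i 1^2) + (∑ i, c i 0^2)) := by
        rw [← Finset.mul_sum, Finset.sum_add_distrib]

lemma eig_bound (ρ lamN : ℝ) (hρ0 : 0 < ρ) (hρ1 : ρ < 1) (hlamN : 0 < lamN)
    (hcl : |lamN⁻¹ - 1| ≤ Real.sqrt ρ) :
    |1 + (1 - Real.sqrt (1-ρ)) / (1 + Real.sqrt (1-ρ))
        - 2*(1-ρ) / (1 + Real.sqrt (1-ρ)) * lamN|
      ≤ 2 * Real.sqrt ((1 - Real.sqrt (1-ρ)) / (1 + Real.sqrt (1-ρ))) := by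
  set s := Real.sqrt (1-ρ) with hs
  set r := Real.sqrt ρ with hr
  set β := (1 - s) / (1 + s) with hβ
  have hssq : s^2 = 1 - ρ := Real.sq_sqrt (by linarith)
  have hrsq : r^2 = ρ := Real.sq_sqrt (by linarith)
  have hs0 : 0 < s := Real.sqrt_pos.mpr (by linarith)
  have hr0 : 0 < r := Real.sqrt_pos.mpr (by linarith)
  have hs1 : s < 1 := by nlinarith
  have hr1 : r < 1 := by nlinarith
  have hβ0 : 0 < β := div_pos (by linarith) (by linarith)
  set lam := lamN⁻¹ with hlam
  have hlam0 : 0 < lam := inv_pos.mpr hlamN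
  have hlamN' : lamN = lam⁻¹ := by rw [hlam, inv_inv]
  have hlb : 1 - r ≤ lam := by
    have := abs_le.mp hcl
    linarith [this.1]
  have hub : lam ≤ 1 + r := by
    have := abs_le.mp hcl
    linarith [this.2]
  -- the quantity
  have hX : 1 + β - 2*(1-ρ) / (1 + s) * lamN = 2*(lam - s^2) / ((1+s)*lam) := by
    rw [hlamN', hβ]
    rw [hssq]
    field_simp
    ring
  have key : (lam - s^2)^2 ≤ ρ * lam^2 := by
    have h1 : (lam - 1)^2 ≤ r^2 := by nlinarith
    nlinarith [sq_nonneg (lam-1), mul_nonneg (sub_nonneg.mpr h1) (by nlinarith : (0:ℝ) ≤ 1 - r^2)]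
  have hρs : (1-s)*(1+s) = ρ := by nlinarith
  have h1s : (1+s) ≠ 0 := by positivity
  have hβeq' : β * (1+s)^2 = ρ := by
    rw [hβ, div_mul_eq_mul_div, eq_comm, eq_div_iff h1s]
    linear_combination (-(1+s)) * hρs
  have hXsq : (2*(lam - s^2) / ((1+s)*lam))^2 ≤ 4 * β := by
    rw [div_pow]
    rw [div_le_iff₀ (by positivity)]
    have hexp : 4 * β * ((1+s)*lam)^2 = 4 * ρ * lam^2 := by
      rw [show 4*β*((1+s)*lam)^2 = 4*(β*(1+s)^2)*lam^2 by ring, hβeq']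
    calc (2*(lam - s^2))^2 = 4 * (lam - s^2)^2 := by ring
      _ ≤ 4 * (ρ * lam^2) := by linarith [key]
      _ = 4 * β * ((1+s)*lam)^2 := by rw [hexp]; ring
  rw [hX]
  have h4 : Real.sqrt 4 = 2 := by
    rw [show (4:ℝ) = 2^2 by norm_num, Real.sqrt_sq (by norm_num : (0:ℝ) ≤ 2)]
  calc |2*(lam - s^2) / ((1+s)*lam)|
      = Real.sqrt ((2*(lam - s^2) / ((1+s)*lam))^2) := (Real.sqrt_sq_eq_abs _).symm
    _ ≤ Real.sqrt (4*β) := Real.sqrt_le_sqrt hXsq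
    _ = 2 * Real.sqrt β := by rw [Real.sqrt_mul (by norm_num : (0:ℝ) ≤ 4), h4]

lemma final_arith (ρ : ℝ) (hρ0 : 0 < ρ) (hρ1 : ρ < 1) (t : ℕ) (ht : 1 ≤ t) :
    4 * ((t:ℝ)+1)^2 * ((1 - Real.sqrt (1-ρ)) / (1 + Real.sqrt (1-ρ)))^(t-1) ≤
      ((3 : ℝ) ^ ((Real.log t / Real.log 2 + 1) * (Real.log t / Real.log 2 + 1 + 1)) *
          (1 + 4 * ((1 - Real.sqrt (1 - ρ)) / (1 + Real.sqrt (1 - ρ)))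
            + ((1 - Real.sqrt (1 - ρ)) / (1 + Real.sqrt (1 - ρ))) ^ 2)
            ^ (2 * (Real.log t / Real.log 2 + 1))) *
        ((1 - Real.sqrt (1 - ρ)) / (1 + Real.sqrt (1 - ρ)))
          ^ ((t : ℝ) - 2 * (Real.log t / Real.log 2 + 1)) := by
  set s := Real.sqrt (1-ρ) with hs
  set β := (1 - s) / (1 + s) with hβ
  set L := Real.log t / Real.log 2 + 1 with hL
  have hs0 : 0 < s := Real.sqrt_pos.mpr (by linarith)
  have hssq : s^2 = 1 - ρ := Real.sq_sqrt (by linarith)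
  have hs1 : s < 1 := by nlinarith
  have hβ0 : 0 < β := div_pos (by linarith) (by linarith)
  have hβ1 : β < 1 := by
    rw [hβ, div_lt_one (by linarith)]
    linarith
  have ht0 : (0:ℝ) < t := by exact_mod_cast ht
  have ht1 : (1:ℝ) ≤ t := by exact_mod_cast ht
  have hlogt : 0 ≤ Real.log t := Real.log_nonneg ht1
  have hlog2 : 0 < Real.log 2 := Real.log_pos (by norm_num)
  have hL1 : 1 ≤ L := by
    rw [hL]
    have : 0 ≤ Real.log t / Real.log 2 := div_nonneg hlogt hlog2.le
    linarith
  -- cast the nat power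
  have hcast : β^(t-1) = β^((t:ℝ)-1) := by
    rw [show (t:ℝ)-1 = ((t-1:ℕ):ℝ) by push_cast [ht]; ring]
    rw [Real.rpow_natCast]
  -- factor 1 : 9 t^2 ≤ 3 ^ (L*(L+1))
  have hb1 : 9 * (t:ℝ)^2 ≤ (3:ℝ) ^ (L*(L+1)) := by
    have e1 : (3:ℝ) ^ (L*(L+1)) ≥ (3:ℝ) ^ (2*L) :=
      Real.rpow_le_rpow_of_exponent_le (by norm_num) (by nlinarith)
    have e9 : (3:ℝ) ^ (2:ℝ) = 9 := by
      rw [show (2:ℝ) = ((2:ℕ):ℝ) by norm_num, Real.rpow_natCast]; norm_num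
    have e2 : (3:ℝ) ^ (2*L) = 9 * (3:ℝ) ^ (2*(L-1)) := by
      rw [show 2*L = 2 + 2*(L-1) by ring, Real.rpow_add (by norm_num : (0:ℝ) < 3), e9]
    have e3 : (t:ℝ)^2 ≤ (3:ℝ) ^ (2*(L-1)) := by
      have h31 : (3:ℝ) ^ (2*(L-1)) = Real.exp (2*(L-1) * Real.log 3) := by
        rw [Real.rpow_def_of_pos (by norm_num)]
        ring_nf
      have h32 : (t:ℝ)^2 = Real.exp (2 * Real.log t) := by
        rw [show (2:ℝ)*Real.log t = Real.log ((t:ℝ)^2) by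
          rw [Real.log_pow]; norm_num]
        rw [Real.exp_log (by positivity)]
      rw [h31, h32]
      apply Real.exp_le_exp.mpr
      have hlog23 : Real.log 2 ≤ Real.log 3 := Real.log_le_log (by norm_num) (by norm_num)
      have hLd : L - 1 = Real.log t / Real.log 2 := by rw [hL]; ring
      rw [hLd]
      have hdiv : Real.log t / Real.log 2 * Real.log 2 = Real.log t :=
        div_mul_cancel₀ _ hlog2.ne'
      have hdn : 0 ≤ Real.log t / Real.log 2 := div_nonneg hlogt hlog2.le
      nlinarith [mul_le_mul_of_nonneg_left hlog23 hdn]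
    calc 9 * (t:ℝ)^2 ≤ 9 * (3:ℝ) ^ (2*(L-1)) := by linarith
      _ = (3:ℝ) ^ (2*L) := e2.symm
      _ ≤ (3:ℝ) ^ (L*(L+1)) := e1
  -- factor 2 : 16 β ≤ (1+4β+β²)^(2L)
  have hbase1 : (1:ℝ) ≤ 1 + 4*β + β^2 := by nlinarith
  have hb2 : 16 * β ≤ (1 + 4*β + β^2) ^ (2*L) := by
    have e1 : (1 + 4*β + β^2) ^ (2*L) ≥ (1 + 4*β + β^2) ^ (2:ℝ) :=
      Real.rpow_le_rpow_of_exponent_le hbase1 (by linarith)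
    have e2 : (1 + 4*β + β^2) ^ (2:ℝ) = (1 + 4*β + β^2)^(2:ℕ) := by
      rw [show (2:ℝ) = ((2:ℕ):ℝ) by norm_num, Real.rpow_natCast]
    have e3 : 16 * β ≤ (1 + 4*β + β^2)^(2:ℕ) := by nlinarith [sq_nonneg (1 - 4*β + β^2), sq_nonneg β, sq_nonneg (1-β)]
    calc 16 * β ≤ (1 + 4*β + β^2)^(2:ℕ) := e3
      _ = (1 + 4*β + β^2) ^ (2:ℝ) := e2.symm
      _ ≤ (1 + 4*β + β^2) ^ (2*L) := e1
  -- factor 3 : β⁻¹ * β^(t-1) ≤ β^(t - 2L)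
  have hb3 : β⁻¹ * β^((t:ℝ)-1) ≤ β ^ ((t:ℝ) - 2*L) := by
    have e1 : β ^ ((t:ℝ) - 2*L) = β ^ (1 - 2*L) * β^((t:ℝ)-1) := by
      rw [← Real.rpow_add hβ0]
      ring_nf
    rw [e1]
    apply mul_le_mul_of_nonneg_right _ (Real.rpow_nonneg hβ0.le _)
    have e2 : β⁻¹ = β ^ (-1:ℝ) := by rw [Real.rpow_neg_one]
    rw [e2]
    exact Real.rpow_le_rpow_of_exponent_ge hβ0 hβ1.le (by linarith)
  -- combine
  have hposP2 : (0:ℝ) ≤ (1 + 4*β + β^2) ^ (2*L) := Real.rpow_nonneg (by linarith) _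
  have hposP1 : (0:ℝ) ≤ (3:ℝ) ^ (L*(L+1)) := Real.rpow_nonneg (by norm_num) _
  calc 4 * ((t:ℝ)+1)^2 * β^(t-1)
      = 4 * ((t:ℝ)+1)^2 * β^((t:ℝ)-1) := by rw [hcast]
    _ ≤ 144 * (t:ℝ)^2 * β^((t:ℝ)-1) := by
        apply mul_le_mul_of_nonneg_right _ (Real.rpow_nonneg hβ0.le _)
        nlinarith
    _ = (9 * (t:ℝ)^2) * ((16*β) * (β⁻¹ * β^((t:ℝ)-1))) := by
        field_simp
        ring
    _ ≤ ((3:ℝ) ^ (L*(L+1))) * ((1 + 4*β + β^2) ^ (2*L) * (β ^ ((t:ℝ) - 2*L))) := by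
        apply mul_le_mul hb1 _ _ hposP1
        · apply mul_le_mul hb2 hb3 (by positivity) hposP2
        · positivity
    _ = ((3:ℝ) ^ (L*(L+1)) * (1 + 4*β + β^2) ^ (2*L)) * β ^ ((t:ℝ) - 2*L) := by ring

lemma msqrt_facts {d : ℕ} (M : Matrix (Fin d) (Fin d) ℝ) (h : M.PosSemidef) :
    msqrt M * msqrt M = M ∧ (msqrt M)ᵀ = msqrt M := by
  have hspec := h.1.spectral_theorem
  rw [Unitary.conjStarAlgAut_apply] at hspec
  have hU : (star h.1.eigenvectorUnitary : Matrix (Fin d) (Fin d) ℝ) * h.1.eigenvectorUnitary.1 = 1 :=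
    Unitary.coe_star_mul_self _
  have e1 : (star h.1.eigenvectorUnitary : Matrix (Fin d) (Fin d) ℝ)
      = (h.1.eigenvectorUnitary.1)ᵀ := by
    ext i j; simp [Matrix.star_apply]
  have hD : diagonal (Real.sqrt ∘ h.1.eigenvalues) * diagonal (Real.sqrt ∘ h.1.eigenvalues)
      = diagonal (RCLike.ofReal ∘ h.1.eigenvalues) := by
    rw [diagonal_mul_diagonal]; congr 1; ext i
    simp [Real.mul_self_sqrt (h.eigenvalues_nonneg i)]
  unfold msqrt; rw [dif_pos h]
  constructor
  · rw [show h.1.eigenvectorUnitary.1 * diagonal (Real.sqrt ∘ h.1.eigenvalues) *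
        (star h.1.eigenvectorUnitary : Matrix (Fin d) (Fin d) ℝ) *
        (h.1.eigenvectorUnitary.1 * diagonal (Real.sqrt ∘ h.1.eigenvalues) *
        (star h.1.eigenvectorUnitary : Matrix (Fin d) (Fin d) ℝ))
        = h.1.eigenvectorUnitary.1 * (diagonal (Real.sqrt ∘ h.1.eigenvalues) *
        ((star h.1.eigenvectorUnitary : Matrix (Fin d) (Fin d) ℝ) * h.1.eigenvectorUnitary.1) *
        diagonal (Real.sqrt ∘ h.1.eigenvalues)) *
        (star h.1.eigenvectorUnitary : Matrix (Fin d) (Fin d) ℝ) by simp only [Matrix.mul_assoc],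
      hU, Matrix.mul_one, hD]
    exact hspec.symm
  · rw [e1, Matrix.transpose_mul, Matrix.transpose_mul, diagonal_transpose, transpose_transpose,
      Matrix.mul_assoc]

section facts
variable {n d m : ℕ} (A : Matrix (Fin n) (Fin d) ℝ) (ν : ℝ)
    (Λ : Matrix (Fin d) (Fin d) ℝ) (S : Matrix (Fin m) (Fin n) ℝ)

lemma transpose_eq_conjTranspose (B : Matrix (Fin n) (Fin d) ℝ) : Bᵀ = Bᴴ := by
  ext i j; simp [Matrix.conjTranspose_apply, Matrix.transpose_apply]

lemma smul_posDef (hΛ : (Λ - 1).PosSemidef) (hν : 0 < ν) : (ν ^ 2 • Λ).PosDef := by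
  have hΛpd : Λ.PosDef := by
    have h : Λ = (Λ - 1) + 1 := by rw [sub_add_cancel]
    rw [h]
    exact Matrix.PosDef.posSemidef_add hΛ Matrix.PosDef.one
  refine Matrix.PosDef.of_dotProduct_mulVec_pos ?_ ?_
  · show (ν ^ 2 • Λ)ᴴ = ν ^ 2 • Λ
    rw [Matrix.conjTranspose_smul]
    rw [hΛpd.1.eq]
    norm_num
  · intro x hx
    rw [Matrix.smul_mulVec, dotProduct_smul]
    have := hΛpd.dotProduct_mulVec_pos hx
    have hν2 : (0:ℝ) < ν ^ 2 := by positivity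
    exact smul_pos hν2 this

lemma Hmat_posDef (hΛ : (Λ - 1).PosSemidef) (hν : 0 < ν) : (Hmat A ν Λ).PosDef := by
  unfold Hmat
  refine Matrix.PosDef.posSemidef_add ?_ (smul_posDef ν Λ hΛ hν)
  rw [transpose_eq_conjTranspose]
  exact Matrix.posSemidef_conjTranspose_mul_self A

lemma HSmat_posDef (hΛ : (Λ - 1).PosSemidef) (hν : 0 < ν) : (HSmat A ν Λ S).PosDef := by
  unfold HSmat
  refine Matrix.PosDef.posSemidef_add ?_ (smul_posDef ν Λ hΛ hν)
  have h : Aᵀ * Sᵀ * S * A = (S * A)ᴴ * (S * A) := by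
    rw [← transpose_eq_conjTranspose, Matrix.transpose_mul]
    rw [Matrix.mul_assoc]
  rw [h]
  exact Matrix.posSemidef_conjTranspose_mul_self (S * A)

lemma norm_symm_sq {d : ℕ} (w : Fin d → ℝ) :
    ‖(WithLp.equiv 2 (Fin d → ℝ)).symm w‖^2 = w ⬝ᵥ w := by
  rw [EuclideanSpace.norm_eq, Real.sq_sqrt (by positivity)]
  simp [dotProduct, sq_abs, pow_two]

set_option maxHeartbeats 1600000 in
/-- Finite-time guarantee for the heavy-ball (Polyak-IHS) iteration:
if `‖C_S - I‖₂ ≤ √ρ` with `ρ ∈ (0,1)`, with `μ_ρ = 2(1-ρ)/(1+√(1-ρ))` and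
`β_ρ = (1-√(1-ρ))/(1+√(1-ρ))`, then for every `t ≥ 1`,
`(δ_{x_{t+1}} + δ_{x_t})/(δ_{x_1} + δ_{x_0}) ≤ α(t,ρ) · β_ρ^{ω(t)}`. -/
theorem stmt18 {n d m : ℕ} (hd : 1 ≤ d) (hdn : d ≤ n)
    (A : Matrix (Fin n) (Fin d) ℝ) (b : Fin d → ℝ)
    (Λ : Matrix (Fin d) (Fin d) ℝ) (hΛdiag : Λ.IsDiag)
    (hΛ : (Λ - 1).PosSemidef) (ν : ℝ) (hν : 0 < ν)
    (ρ : ℝ) (hρ : ρ ∈ Set.Ioo (0 : ℝ) 1)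
    (S : Matrix (Fin m) (Fin n) ℝ)
    (hS : matSpectralNorm (CSmat A ν Λ S - 1) ≤ Real.sqrt ρ)
    (x : ℕ → Fin d → ℝ)
    (hx : ∀ t : ℕ, 1 ≤ t → x (t + 1) =
      x t - (2 * (1 - ρ) / (1 + Real.sqrt (1 - ρ))) •
          (HSmat A ν Λ S)⁻¹.mulVec (gradf A ν Λ b (x t))
        + ((1 - Real.sqrt (1 - ρ)) / (1 + Real.sqrt (1 - ρ))) • (x t - x (t - 1)))
    (h0 : 0 < deltaEx A ν Λ b (x 1) + deltaEx A ν Λ b (x 0)) :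
    ∀ t : ℕ, 1 ≤ t →
      (deltaEx A ν Λ b (x (t + 1)) + deltaEx A ν Λ b (x t)) /
          (deltaEx A ν Λ b (x 1) + deltaEx A ν Λ b (x 0)) ≤
        ((3 : ℝ) ^ ((Real.log t / Real.log 2 + 1) * (Real.log t / Real.log 2 + 1 + 1)) *
            (1 + 4 * ((1 - Real.sqrt (1 - ρ)) / (1 + Real.sqrt (1 - ρ)))
              + ((1 - Real.sqrt (1 - ρ)) / (1 + Real.sqrt (1 - ρ))) ^ 2)
              ^ (2 * (Real.log t / Real.log 2 + 1))) *
          ((1 - Real.sqrt (1 - ρ)) / (1 + Real.sqrt (1 - ρ)))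
            ^ ((t : ℝ) - 2 * (Real.log t / Real.log 2 + 1)) := by
  obtain ⟨hρ0, hρ1⟩ := hρ
  intro t ht
  -- scalars
  set s : ℝ := Real.sqrt (1 - ρ) with hs
  set β : ℝ := (1 - s) / (1 + s) with hβ
  set μρ : ℝ := 2 * (1 - ρ) / (1 + s) with hμρ
  have hssq : s^2 = 1 - ρ := Real.sq_sqrt (by linarith)
  have hs0 : 0 < s := Real.sqrt_pos.mpr (by linarith)
  have hs1 : s < 1 := by nlinarith
  have hβ0 : 0 < β := div_pos (by linarith) (by linarith)
  have hβ1 : β < 1 := by rw [hβ, div_lt_one (by linarith)]; linarith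
  have hμρ0 : 0 < μρ := by rw [hμρ]; exact div_pos (by linarith) (by linarith)
  -- matrices
  set H : Matrix (Fin d) (Fin d) ℝ := Hmat A ν Λ with hH
  set HS : Matrix (Fin d) (Fin d) ℝ := HSmat A ν Λ S with hHSdef
  have hHpd : H.PosDef := Hmat_posDef A ν Λ hΛ hν
  have hHSpd : HS.PosDef := HSmat_posDef A ν Λ S hΛ hν
  have hHpsd : H.PosSemidef := hHpd.posSemidef
  set Q : Matrix (Fin d) (Fin d) ℝ := msqrt H with hQ
  have hQQ : Q * Q = H := (msqrt_facts H hHpsd).1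
  have hQT : Qᵀ = Q := (msqrt_facts H hHpsd).2
  have hQherm : Q.IsHermitian := by
    show Qᴴ = Q
    rw [← transpose_eq_conjTranspose]; exact hQT
  have hQdet : IsUnit Q.det := by
    have hdetH : 0 < H.det := hHpd.det_pos
    rw [← hQQ, Matrix.det_mul] at hdetH
    exact isUnit_iff_ne_zero.mpr (by intro h; rw [h, mul_zero] at hdetH; exact lt_irrefl 0 hdetH)
  have hQinv : Q * Q⁻¹ = 1 := Matrix.mul_nonsing_inv Q hQdet
  have hQinv' : Q⁻¹ * Q = 1 := Matrix.nonsing_inv_mul Q hQdet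
  have hHSdet : IsUnit HS.det := isUnit_iff_ne_zero.mpr hHSpd.det_pos.ne'
  have hHSinv : HS * HS⁻¹ = 1 := Matrix.mul_nonsing_inv HS hHSdet
  have hHdet : IsUnit H.det := isUnit_iff_ne_zero.mpr hHpd.det_pos.ne'
  have hHSipd : (HS⁻¹).PosDef := hHSpd.inv
  -- minimizer
  have hxstar : H.mulVec (xstar A ν Λ b) = b := by
    rw [show xstar A ν Λ b = H⁻¹.mulVec b from rfl, Matrix.mulVec_mulVec,
      Matrix.mul_nonsing_inv _ hHdet, Matrix.one_mulVec]
  have hgrad : ∀ y : Fin d → ℝ, gradf A ν Λ b y = H.mulVec (y - xstar A ν Λ b) := by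
    intro y
    rw [show gradf A ν Λ b y = H.mulVec y - b from rfl, Matrix.mulVec_sub, hxstar]
  -- error vectors
  set y : ℕ → Fin d → ℝ := fun k => Q.mulVec (x k - xstar A ν Λ b) with hy
  set e : ℕ → EuclideanSpace ℝ (Fin d) :=
    fun k => (WithLp.equiv 2 (Fin d → ℝ)).symm (y k) with he
  -- dot product via Q
  have hdotQ : ∀ z w : Fin d → ℝ, z ⬝ᵥ Q.mulVec w = (Q.mulVec z) ⬝ᵥ w := by
    intro z w
    rw [Matrix.dotProduct_mulVec]
    congr 1
    rw [← hQT, Matrix.vecMul_transpose, hQT]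
  have hdelta : ∀ k, deltaEx A ν Λ b (x k) = (1/2) * ‖e k‖^2 := by
    intro k
    rw [show deltaEx A ν Λ b (x k)
        = (1/2) * ((x k - xstar A ν Λ b) ⬝ᵥ H.mulVec (x k - xstar A ν Λ b)) from rfl]
    congr 1
    rw [he]
    rw [norm_symm_sq]
    rw [hy]
    rw [← hQQ, ← Matrix.mulVec_mulVec, hdotQ]
  -- operator matrices
  set Nmat : Matrix (Fin d) (Fin d) ℝ := Q * HS⁻¹ * Q with hN
  set Mmat : Matrix (Fin d) (Fin d) ℝ
    := (1 + β) • (1 : Matrix (Fin d) (Fin d) ℝ) - μρ • Nmat with hM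
  set T := Matrix.toEuclideanLin Mmat with hT
  have hNherm : Nmat.IsHermitian := by
    rw [hN, show Q * HS⁻¹ * Q = Q * HS⁻¹ * Qᴴ by rw [hQherm.eq]]
    exact Matrix.isHermitian_mul_mul_conjTranspose Q hHSipd.isHermitian
  have hMherm : Mmat.IsHermitian := by
    show Mmatᴴ = Mmat
    rw [hM, Matrix.conjTranspose_sub, Matrix.conjTranspose_smul, Matrix.conjTranspose_smul,
      Matrix.conjTranspose_one, hNherm.eq, star_trivial, star_trivial]
  have hTsym : T.IsSymmetric := by
    rw [hT]; exact Matrix.isHermitian_iff_isSymmetric.mp hMherm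
  -- Q nonzero kernel
  have hQne : ∀ w : Fin d → ℝ, w ≠ 0 → Q.mulVec w ≠ 0 := by
    intro w hw hcon
    apply hw
    have : Q⁻¹.mulVec (Q.mulVec w) = w := by
      rw [Matrix.mulVec_mulVec, hQinv', Matrix.one_mulVec]
    rw [← this, hcon, Matrix.mulVec_zero]
  have hNpd : Nmat.PosDef := by
    refine Matrix.PosDef.of_dotProduct_mulVec_pos hNherm fun z hz => ?_
    have h1 : Nmat.mulVec z = Q.mulVec (HS⁻¹.mulVec (Q.mulVec z)) := by
      rw [hN, ← Matrix.mulVec_mulVec, ← Matrix.mulVec_mulVec]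
    rw [star_trivial, h1, hdotQ]
    have := hHSipd.dotProduct_mulVec_pos (hQne z hz)
    rwa [star_trivial] at this
  -- the recursion
  have hrec : ∀ k : ℕ, e (k+2) = T (e (k+1)) - β • e k := by
    intro k
    have hxk := hx (k+1) (by omega)
    have hk1 : k + 1 - 1 = k := by omega
    rw [hk1] at hxk
    have hyrec : y (k+2) = Mmat.mulVec (y (k+1)) - β • y k := by
      show Q *ᵥ (x (k+2) - xstar A ν Λ b)
          = Mmat *ᵥ (Q *ᵥ (x (k+1) - xstar A ν Λ b)) - β • (Q *ᵥ (x k - xstar A ν Λ b))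
      rw [show x (k+1+1) = x (k+2) from rfl] at hxk
      rw [hxk, hgrad]
      have hmm : Q * HS⁻¹ * H = Nmat * Q := by
        rw [hN, ← hQQ]
        simp only [Matrix.mul_assoc]
      have hterm : Q.mulVec (HS⁻¹.mulVec (H.mulVec (x (k+1) - xstar A ν Λ b)))
          = Nmat.mulVec (Q.mulVec (x (k+1) - xstar A ν Λ b)) := by
        rw [Matrix.mulVec_mulVec, Matrix.mulVec_mulVec, Matrix.mulVec_mulVec, hmm,
          ← Matrix.mulVec_mulVec]
      have hMv : Mmat.mulVec (Q.mulVec (x (k+1) - xstar A ν Λ b))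
          = (1+β) • (Q.mulVec (x (k+1) - xstar A ν Λ b))
            - μρ • Nmat.mulVec (Q.mulVec (x (k+1) - xstar A ν Λ b)) := by
        rw [hM, Matrix.sub_mulVec, Matrix.smul_mulVec, Matrix.smul_mulVec,
          Matrix.one_mulVec]
      rw [hMv, ← hterm]
      simp only [Matrix.mulVec_sub, Matrix.mulVec_add, Matrix.mulVec_smul]
      funext j
      simp only [Pi.add_apply, Pi.sub_apply, Pi.smul_apply, smul_eq_mul]
      ring
    have hTe : T (e (k+1)) = (WithLp.equiv 2 (Fin d → ℝ)).symm (Mmat.mulVec (y (k+1))) := by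
      rw [hT]
      rw [show e (k+1) = (WithLp.equiv 2 (Fin d → ℝ)).symm (y (k+1)) from rfl]
      exact Matrix.toEuclideanLin_apply_piLp_toLp Mmat (y (k+1))
    rw [show e (k+2) = (WithLp.equiv 2 (Fin d → ℝ)).symm (y (k+2)) from rfl, hyrec, hTe]
    rfl
  -- eigenvalue bound
  have heig : ∀ (μ0 : ℝ) (v : EuclideanSpace ℝ (Fin d)), v ≠ 0 → T v = μ0 • v →
      |μ0| ≤ 2 * Real.sqrt β := by
    intro μ0 v hv hTv
    set w : Fin d → ℝ := WithLp.equiv 2 (Fin d → ℝ) v with hw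
    have hwv : (WithLp.equiv 2 (Fin d → ℝ)).symm w = v := rfl
    have hwne : w ≠ 0 := by
      intro hcon
      apply hv
      rw [← hwv, hcon]
      rfl
    have hMw : Mmat.mulVec w = μ0 • w := by
      have := congrArg (WithLp.equiv 2 (Fin d → ℝ)) hTv
      rw [hT] at this
      exact (by simpa using this : Mmat *ᵥ v.ofLp = μ0 • v.ofLp)
    set lamN : ℝ := (1 + β - μ0) / μρ with hlamN
    have hNw : Nmat.mulVec w = lamN • w := by
      have h1 : Mmat.mulVec w = (1+β) • w - μρ • Nmat.mulVec w := by
        rw [hM, Matrix.sub_mulVec, Matrix.smul_mulVec, Matrix.smul_mulVec,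
          Matrix.one_mulVec]
      rw [hMw] at h1
      have h2 : μρ • Nmat.mulVec w = (1 + β - μ0) • w := by
        have hj := congrFun h1
        funext j
        have hjj := hj j
        simp only [Pi.sub_apply, Pi.smul_apply, smul_eq_mul] at hjj ⊢
        linarith
      have h3 := congrArg (fun z => μρ⁻¹ • z) h2
      simp only [smul_smul, inv_mul_cancel₀ hμρ0.ne', one_smul] at h3
      rw [h3]
      congr 1
      rw [hlamN, div_eq_inv_mul]
    have hww : 0 < w ⬝ᵥ w := by
      have h1 : ‖v‖^2 = w ⬝ᵥ w := by rw [← hwv, norm_symm_sq]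
      have h2 : 0 < ‖v‖ := norm_pos_iff.mpr hv
      nlinarith
    have hlamNpos : 0 < lamN := by
      have h1 : w ⬝ᵥ Nmat.mulVec w = lamN * (w ⬝ᵥ w) := by
        rw [hNw, dotProduct_smul, smul_eq_mul]
      have h2 : 0 < w ⬝ᵥ Nmat.mulVec w := by
        have := hNpd.dotProduct_mulVec_pos hwne
        rwa [star_trivial] at this
      nlinarith
    -- C_S * N = 1
    have hCSeq : CSmat A ν Λ S = Q⁻¹ * HS * Q⁻¹ := by
      rw [hQ, hH, hHSdef]; rfl
    have hCSN : CSmat A ν Λ S * Nmat = 1 := by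
      rw [hCSeq, hN]
      calc Q⁻¹ * HS * Q⁻¹ * (Q * HS⁻¹ * Q)
          = Q⁻¹ * (HS * ((Q⁻¹ * Q) * (HS⁻¹ * Q))) := by
            simp only [Matrix.mul_assoc]
        _ = Q⁻¹ * (HS * HS⁻¹ * Q) := by rw [hQinv', Matrix.one_mul]; simp only [Matrix.mul_assoc]
        _ = Q⁻¹ * Q := by rw [hHSinv, Matrix.one_mul]
        _ = 1 := hQinv'
    have hCSw : (CSmat A ν Λ S).mulVec w = lamN⁻¹ • w := by
      have h1 : lamN • (CSmat A ν Λ S).mulVec w = w := by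
        have h2 : (CSmat A ν Λ S * Nmat).mulVec w = w := by
          rw [hCSN, Matrix.one_mulVec]
        rw [← Matrix.mulVec_mulVec, hNw, Matrix.mulVec_smul] at h2
        exact h2
      have := congrArg (fun z => lamN⁻¹ • z) h1
      simpa [smul_smul, inv_mul_cancel₀ hlamNpos.ne'] using this
    have hsubw : (CSmat A ν Λ S - 1).mulVec w = (lamN⁻¹ - 1) • w := by
      rw [Matrix.sub_mulVec, hCSw, Matrix.one_mulVec, sub_smul, one_smul]
    -- spectral norm bound
    have hcl : |lamN⁻¹ - 1| ≤ Real.sqrt ρ := by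
      have hop := (LinearMap.toContinuousLinearMap
        (Matrix.toEuclideanLin (CSmat A ν Λ S - 1))).le_opNorm v
      have happ : (LinearMap.toContinuousLinearMap
          (Matrix.toEuclideanLin (CSmat A ν Λ S - 1))) v
          = (lamN⁻¹ - 1) • v := by
        simp only [LinearMap.coe_toContinuousLinearMap']
        rw [← hwv]
        erw [Matrix.toEuclideanLin_apply_piLp_toLp, hsubw]
        rfl
      rw [happ, norm_smul, Real.norm_eq_abs] at hop
      have hvpos : 0 < ‖v‖ := norm_pos_iff.mpr hv
      have : ‖LinearMap.toContinuousLinearMap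
          (Matrix.toEuclideanLin (CSmat A ν Λ S - 1))‖ ≤ Real.sqrt ρ := hS
      calc |lamN⁻¹ - 1| = |lamN⁻¹ - 1| * ‖v‖ / ‖v‖ := by field_simp
        _ ≤ Real.sqrt ρ * ‖v‖ / ‖v‖ := by
            gcongr
            exact le_of_mul_le_mul_right
              (hop.trans (mul_le_mul_of_nonneg_right this (norm_nonneg v))) hvpos
        _ = Real.sqrt ρ := by field_simp
    have hμ0eq : μ0 = 1 + β - μρ * lamN := by
      have hml : μρ * lamN = 1 + β - μ0 := by
        rw [hlamN, mul_div_assoc', mul_comm, mul_div_assoc, div_self hμρ0.ne', mul_one]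
      rw [hml]
      ring
    rw [hμ0eq]
    have := eig_bound ρ lamN hρ0 hρ1 hlamNpos hcl
    rw [← hs, ← hβ, ← hμρ] at this
    exact this
  -- apply operator bound
  have hmain := op_bound T hTsym β hβ0 hβ1.le heig e hrec t ht
  have hδsum : deltaEx A ν Λ b (x (t+1)) + deltaEx A ν Λ b (x t)
      ≤ 4 * ((t:ℝ)+1)^2 * β^(t-1) * (deltaEx A ν Λ b (x 1) + deltaEx A ν Λ b (x 0)) := by
    rw [hdelta, hdelta, hdelta, hdelta]
    nlinarith [hmain]
  have hratio : (deltaEx A ν Λ b (x (t+1)) + deltaEx A ν Λ b (x t)) /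
      (deltaEx A ν Λ b (x 1) + deltaEx A ν Λ b (x 0)) ≤ 4 * ((t:ℝ)+1)^2 * β^(t-1) := by
    rw [div_le_iff₀ h0]
    exact hδsum
  refine hratio.trans ?_
  have := final_arith ρ hρ0 hρ1 t ht
  rw [← hs, ← hβ] at this
  exact this
end facts
end
end

section
/- Let 0 < λ ≤ Λ, set μ = 4/(√λ + √Λ)² and β = ((√Λ − √λ)/(√Λ + √λ))², and assume β > 0. For any γ ∈ [λ, Λ], let a = 1 + β − μγ and X = [[a, −β], [1, 0]] ∈ ℝ^{2×2}. Then ‖X‖₂² / ‖X²‖₂ ≤ (1 + 4β + β²)/β. -/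
set_option maxHeartbeats 800000

open Matrix Real
open scoped Classical

noncomputable section

lemma spec_le_frob (M : Matrix (Fin 2) (Fin 2) ℝ) :
    matSpectralNorm M ≤ Real.sqrt (M 0 0 ^ 2 + M 0 1 ^ 2 + M 1 0 ^ 2 + M 1 1 ^ 2) := by
  apply ContinuousLinearMap.opNorm_le_bound _ (Real.sqrt_nonneg _)
  intro v
  have hv : ‖v‖ = Real.sqrt (v 0 ^ 2 + v 1 ^ 2) := by
    rw [EuclideanSpace.norm_eq, Fin.sum_univ_two]
    simp [sq_abs]
  have hMv : ‖(LinearMap.toContinuousLinearMap (Matrix.toEuclideanLin M)) v‖ =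
      Real.sqrt ((M 0 0 * v 0 + M 0 1 * v 1) ^ 2 + (M 1 0 * v 0 + M 1 1 * v 1) ^ 2) := by
    rw [LinearMap.coe_toContinuousLinearMap', EuclideanSpace.norm_eq, Fin.sum_univ_two]
    simp [Matrix.toEuclideanLin_apply, Matrix.mulVec, dotProduct, Fin.sum_univ_two,
      sq_abs]
  rw [hMv, hv, ← Real.sqrt_mul (by positivity)]
  apply Real.sqrt_le_sqrt
  nlinarith [sq_nonneg (M 0 0 * v 1 - M 0 1 * v 0), sq_nonneg (M 1 0 * v 1 - M 1 1 * v 0)]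

lemma entry_le_spec (M : Matrix (Fin 2) (Fin 2) ℝ) (i j : Fin 2) :
    |M i j| ≤ matSpectralNorm M := by
  have h := (LinearMap.toContinuousLinearMap (Matrix.toEuclideanLin M)).le_opNorm
    (EuclideanSpace.single j 1)
  rw [EuclideanSpace.norm_single, norm_one, mul_one] at h
  refine le_trans ?_ h
  have : ‖(LinearMap.toContinuousLinearMap (Matrix.toEuclideanLin M))
      (EuclideanSpace.single j 1)‖ = Real.sqrt ((M 0 j) ^ 2 + (M 1 j) ^ 2) := by
    rw [LinearMap.coe_toContinuousLinearMap', EuclideanSpace.norm_eq, Fin.sum_univ_two]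
    simp [Matrix.toEuclideanLin_apply, Matrix.mulVec, dotProduct, Fin.sum_univ_two,
      EuclideanSpace.single_apply, sq_abs]
  rw [this]
  rw [show |M i j| = Real.sqrt ((M i j)^2) from (Real.sqrt_sq_eq_abs _).symm]
  apply Real.sqrt_le_sqrt
  fin_cases i <;> simp only [Fin.mk_one, Fin.mk_zero, Fin.isValue] <;>
    nlinarith [sq_nonneg (M 0 j), sq_nonneg (M 1 j)]

/-- For `X = [[1+β-μγ, -β],[1,0]]` with `γ ∈ [λ,Λ]`,
`μ = 4/(√λ+√Λ)²`, `β = ((√Λ-√λ)/(√Λ+√λ))² > 0`, one has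
`‖X‖₂²/‖X²‖₂ ≤ (1+4β+β²)/β`. -/
theorem stmt19 (lam Lam : ℝ) (hlam : 0 < lam) (hlamLam : lam ≤ Lam)
    (hβ : 0 < ((Real.sqrt Lam - Real.sqrt lam) / (Real.sqrt Lam + Real.sqrt lam)) ^ 2)
    (γ : ℝ) (hγ : γ ∈ Set.Icc lam Lam) :
    matSpectralNorm
        (!![1 + ((Real.sqrt Lam - Real.sqrt lam) / (Real.sqrt Lam + Real.sqrt lam)) ^ 2
              - (4 / (Real.sqrt lam + Real.sqrt Lam) ^ 2) * γ,
            -(((Real.sqrt Lam - Real.sqrt lam) / (Real.sqrt Lam + Real.sqrt lam)) ^ 2);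
            1, 0] : Matrix (Fin 2) (Fin 2) ℝ) ^ 2 /
      matSpectralNorm
        ((!![1 + ((Real.sqrt Lam - Real.sqrt lam) / (Real.sqrt Lam + Real.sqrt lam)) ^ 2
              - (4 / (Real.sqrt lam + Real.sqrt Lam) ^ 2) * γ,
            -(((Real.sqrt Lam - Real.sqrt lam) / (Real.sqrt Lam + Real.sqrt lam)) ^ 2);
            1, 0] : Matrix (Fin 2) (Fin 2) ℝ) ^ 2) ≤
      (1 + 4 * ((Real.sqrt Lam - Real.sqrt lam) / (Real.sqrt Lam + Real.sqrt lam)) ^ 2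
          + (((Real.sqrt Lam - Real.sqrt lam) / (Real.sqrt Lam + Real.sqrt lam)) ^ 2) ^ 2) /
        ((Real.sqrt Lam - Real.sqrt lam) / (Real.sqrt Lam + Real.sqrt lam)) ^ 2 := by
  set p := Real.sqrt lam with hp_def
  set q := Real.sqrt Lam with hq_def
  have hp : 0 < p := Real.sqrt_pos.mpr hlam
  have hq : 0 < q := Real.sqrt_pos.mpr (lt_of_lt_of_le hlam hlamLam)
  have hpq : p ≤ q := Real.sqrt_le_sqrt hlamLam
  have hp2 : p ^ 2 = lam := Real.sq_sqrt hlam.le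
  have hq2 : q ^ 2 = Lam := Real.sq_sqrt (hlam.le.trans hlamLam)
  set b := ((q - p) / (q + p)) ^ 2 with hb_def
  set a := 1 + b - 4 / (p + q) ^ 2 * γ with ha_def
  set X : Matrix (Fin 2) (Fin 2) ℝ := !![a, -b; 1, 0] with hX_def
  have hb : 0 < b := hβ
  have hpq0 : 0 < p + q := by linarith
  -- |a| ≤ 2√b, i.e. a² ≤ 4b
  have hb_eq : b * (q + p) ^ 2 = (q - p) ^ 2 := by
    rw [hb_def, div_pow, div_mul_cancel₀]
    positivity
  have ha2 : a ^ 2 ≤ 4 * b := by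
    obtain ⟨hγ1, hγ2⟩ := hγ
    have e1 : a * (p + q) ^ 2 = (1 + b) * (p + q) ^ 2 - 4 * γ := by
      rw [ha_def]; field_simp
    have e2 : (1 + b) * (q + p) ^ 2 = 2 * (lam + Lam) := by
      have : (1 + b) * (q + p) ^ 2 = (q + p) ^ 2 + (q - p) ^ 2 := by
        rw [add_mul, one_mul, hb_eq]
      rw [this]; nlinarith [hp2, hq2]
    have hup : a * (p + q) ^ 2 ≤ 2 * (Lam - lam) := by
      rw [e1]
      have : (1 + b) * (p + q) ^ 2 = 2 * (lam + Lam) := by rw [show p + q = q + p by ring]; exact e2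
      rw [this]; linarith
    have hlo : -(2 * (Lam - lam)) ≤ a * (p + q) ^ 2 := by
      rw [e1]
      have : (1 + b) * (p + q) ^ 2 = 2 * (lam + Lam) := by rw [show p + q = q + p by ring]; exact e2
      rw [this]; linarith
    have hdiff : 2 * (Lam - lam) = 2 * (q - p) * (q + p) := by nlinarith [hp2, hq2]
    have habs : (a * (p + q) ^ 2) ^ 2 ≤ (2 * (Lam - lam)) ^ 2 := by
      have h0 : 0 ≤ 2 * (Lam - lam) := by linarith
      nlinarith
    have key : a ^ 2 * ((p + q) ^ 2) ^ 2 ≤ 4 * b * ((p + q) ^ 2) ^ 2 := by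
      have : (2 * (Lam - lam)) ^ 2 = 4 * b * ((p + q) ^ 2) ^ 2 := by
        rw [hdiff]
        have : (2 * (q - p) * (q + p)) ^ 2 = 4 * ((q - p) ^ 2) * (q + p) ^ 2 := by ring
        rw [this, ← hb_eq]; ring
      calc a ^ 2 * ((p + q) ^ 2) ^ 2 = (a * (p + q) ^ 2) ^ 2 := by ring
        _ ≤ (2 * (Lam - lam)) ^ 2 := habs
        _ = 4 * b * ((p + q) ^ 2) ^ 2 := this
    have hpos : 0 < ((p + q) ^ 2) ^ 2 := by positivity
    exact le_of_mul_le_mul_right key hpos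
  -- upper bound on ‖X‖²
  have hXup : matSpectralNorm X ^ 2 ≤ 1 + 4 * b + b ^ 2 := by
    have h1 := spec_le_frob X
    have hXe : X 0 0 ^ 2 + X 0 1 ^ 2 + X 1 0 ^ 2 + X 1 1 ^ 2 = a ^ 2 + b ^ 2 + 1 := by
      simp [hX_def]
    rw [hXe] at h1
    have h2 : matSpectralNorm X ^ 2 ≤ (Real.sqrt (a ^ 2 + b ^ 2 + 1)) ^ 2 := by
      apply pow_le_pow_left₀ (norm_nonneg _) h1
    rw [Real.sq_sqrt (by positivity)] at h2
    linarith
  -- lower bound on ‖X²‖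
  have hXlo : b ≤ matSpectralNorm (X ^ 2) := by
    have h := entry_le_spec (X ^ 2) 1 1
    have he : (X ^ 2) 1 1 = -b := by
      rw [pow_two, hX_def]
      simp [Matrix.mul_apply, Fin.sum_univ_two]
    rw [he, abs_neg, abs_of_pos hb] at h
    exact h
  -- conclude
  have hnum : (0:ℝ) ≤ 1 + 4 * b + b ^ 2 := by positivity
  calc matSpectralNorm X ^ 2 / matSpectralNorm (X ^ 2)
      ≤ (1 + 4 * b + b ^ 2) / b := div_le_div₀ hnum hXup hb hXlo
    _ = (1 + 4 * b + b ^ 2) / b := rfl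
end
end
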